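/- arXiv:1504.04318 — 4 statements merged into one kernel-verified Lean document; each statement's English description precedes it below -/
import Mathlib

section
/- Let Y be a Banach space, r a nonpositive integer, and X the space of functions from [r,0]∩ℤ to Y with the sup norm. Consider the delayed difference equation x̄(m+1) = L̄_m x̄_m + f̄_m(x̄_m) on (Y^N)-valued sequences, where L̄_m = (L^(1)_m,…,L^(N)_m) with each L^(i)_m : X → Y bounded linear, f̄_m : X^N → Y^N Lipschitz with f̄_m(0)=0, and x̄_m ∈ X^N denotes the history segment x̄_m(j)=x̄(m+j). Let A^(i)_{m,n} : X → X be the evolution operators of the linear equations v_i(m+1)=L^(i)_m(v_{i,m}). Suppose there are double sequences a^(i)_{m,n} and a'_{m,n} defined for m ≥ n ≥ 0 with ‖A^(i)_{m,n}‖ ≤ a^(i)_{m,n} ≤ a'_{m,n}, and suppose λ := max_{i} sup_{m≥n≥0} (1/a'_{m,n}) Σ_{k=n}^{m-1} a^(i)_{m,k+1} Lip(f^(i)_k) a'_{k,n} < 1. Then for every initial segment ᾱ ∈ X^N and every m ≥ n, the solution with x̄_n = ᾱ satisfies ‖x̄_m(·,n,ᾱ)‖ ≤ (1/(1-λ)) a'_{m,n}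 ‖ᾱ‖. -/
/-- The segment at time `m` of a `Y`-valued sequence `u`, as an element of the segment
space `X = Fin (ρ+1) → Y` (index `j` corresponds to the delay offset `j - ρ ∈ [-ρ,0]`). -/
def seg {Y : Type*} (ρ : ℕ) (u : ℤ → Y) (m : ℤ) : Fin (ρ + 1) → Y :=
  fun j => u (m - ρ + j)


def shiftL {Y : Type*} [NormedAddCommGroup Y] [NormedSpace ℝ Y] (ρ : ℕ)
    (T : (Fin (ρ + 1) → Y) →L[ℝ] Y) : (Fin (ρ + 1) → Y) →ₗ[ℝ] (Fin (ρ + 1) → Y) where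
  toFun u j := if h : (j : ℕ) < ρ then u ⟨(j : ℕ) + 1, Nat.succ_lt_succ h⟩ else T u
  map_add' u v := by funext j; by_cases h : (j : ℕ) < ρ <;> simp [h]
  map_smul' c u := by funext j; by_cases h : (j : ℕ) < ρ <;> simp [h]

def ins {Y : Type*} [NormedAddCommGroup Y] (ρ : ℕ) (y : Y) : Fin (ρ + 1) → Y :=
  fun j => if (j : ℕ) < ρ then 0 else y

lemma ins_norm_le {Y : Type*} [NormedAddCommGroup Y] (ρ : ℕ) (y : Y) :
    ‖ins ρ y‖ ≤ ‖y‖ := by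
  refine (pi_norm_le_iff_of_nonneg (norm_nonneg y)).2 fun j => ?_
  by_cases h : (j : ℕ) < ρ <;> simp [ins, h]

lemma seg_succ_of_lt {Y : Type*} (ρ : ℕ) (u : ℤ → Y) (m : ℤ) (j : Fin (ρ + 1))
    (h : (j : ℕ) < ρ) :
    seg ρ u (m + 1) j = seg ρ u m ⟨(j : ℕ) + 1, Nat.succ_lt_succ h⟩ := by
  simp only [seg]; congr 1; push_cast; ring

lemma seg_succ_of_top {Y : Type*} (ρ : ℕ) (u : ℤ → Y) (m : ℤ) (j : Fin (ρ + 1))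
    (h : ¬ (j : ℕ) < ρ) : seg ρ u (m + 1) j = u (m + 1) := by
  have hj : (j : ℕ) = ρ := by omega
  simp only [seg]; congr 1; push_cast [hj]; ring

lemma seg_shift {Y : Type*} [NormedAddCommGroup Y] [NormedSpace ℝ Y] (ρ : ℕ)
    (T : (Fin (ρ + 1) → Y) →L[ℝ] Y) (u : ℤ → Y) (m : ℤ)
    (h : u (m + 1) = T (seg ρ u m)) :
    seg ρ u (m + 1) = shiftL ρ T (seg ρ u m) := by
  funext j
  by_cases hj : (j : ℕ) < ρ
  · rw [seg_succ_of_lt ρ u m j hj]; simp [shiftL, hj]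
  · rw [seg_succ_of_top ρ u m j hj, h]; simp [shiftL, hj]

lemma sum_Ico_succ_top_int {M : Type*} [AddCommMonoid M] (n m : ℤ) (h : n ≤ m) (f : ℤ → M) :
    ∑ k ∈ Finset.Ico n (m + 1), f k = (∑ k ∈ Finset.Ico n m, f k) + f m := by
  have hins : Finset.Ico n (m + 1) = insert m (Finset.Ico n m) := by
    rw [Finset.Ico_insert_right h]
    ext k; simp [Finset.mem_Ico, Finset.mem_Icc, Int.lt_add_one_iff]
  rw [hins, Finset.sum_insert Finset.right_notMem_Ico, add_comm]

/-- Abstract stability theorem for the nonlinear delayed difference equation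
`x̄(m+1) = L̄_m x̄_m + f̄_m(x̄_m)`: if the evolution operators `A^(i)_{m,n}` of the linear
part satisfy `‖A^(i)_{m,n}‖ ≤ a^(i)_{m,n} ≤ a'_{m,n}` and
`λ = max_i sup (1/a'_{m,n}) Σ_{k=n}^{m-1} a^(i)_{m,k+1} Lip(f^(i)_k) a'_{k,n} < 1`, then
`‖x̄_m(·,n,ᾱ)‖ ≤ (1/(1-λ)) a'_{m,n} ‖ᾱ‖` for all `m ≥ n`. All product spaces carry the
sup norm. -/
theorem stmt0 {Y : Type*} [NormedAddCommGroup Y] [NormedSpace ℝ Y] [CompleteSpace Y]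
    {N ρ : ℕ}
    (L : ℤ → Fin N → ((Fin (ρ + 1) → Y) →L[ℝ] Y))
    (f : ℤ → (Fin N → Fin (ρ + 1) → Y) → (Fin N → Y))
    (Lf : ℤ → Fin N → ℝ)
    (hf0 : ∀ m i, f m 0 i = 0)
    (hfLip : ∀ m i u v, ‖f m u i - f m v i‖ ≤ Lf m i * ‖u - v‖)
    (A : ℤ → ℤ → Fin N → ((Fin (ρ + 1) → Y) →L[ℝ] (Fin (ρ + 1) → Y)))
    (hA : ∀ i : Fin N, ∀ n : ℤ, ∀ α : Fin (ρ + 1) → Y, ∃ v : ℤ → Y,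
      (∀ j : Fin (ρ + 1), v (n - ρ + j) = α j) ∧
      (∀ m, n ≤ m → v (m + 1) = L m i (seg ρ v m)) ∧
      (∀ m, n ≤ m → A m n i α = seg ρ v m))
    (aa : ℤ → ℤ → Fin N → ℝ) (a' : ℤ → ℤ → ℝ)
    (haA : ∀ m n : ℤ, ∀ i, n ≤ m → ‖A m n i‖ ≤ aa m n i)
    (haa' : ∀ m n : ℤ, ∀ i, n ≤ m → aa m n i ≤ a' m n)
    (ha'pos : ∀ m n : ℤ, 0 ≤ n → n ≤ m → 0 < a' m n)
    (lam : ℝ) (hlam1 : lam < 1)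
    (hlam : ∀ i : Fin N, ∀ m n : ℤ, 0 ≤ n → n ≤ m →
      (1 / a' m n) * ∑ k ∈ Finset.Ico n m, aa m (k + 1) i * Lf k i * a' k n ≤ lam)
    (n : ℤ) (hn : 0 ≤ n) (α : Fin N → Fin (ρ + 1) → Y) (x : ℤ → Fin N → Y)
    (hinit : ∀ i : Fin N, ∀ j : Fin (ρ + 1), x (n - ρ + j) i = α i j)
    (heq : ∀ m, n ≤ m → ∀ i,
      x (m + 1) i =
        L m i (seg ρ (fun k => x k i) m) + f m (fun i' => seg ρ (fun k => x k i') m) i) :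
    ∀ m, n ≤ m →
      ‖(fun i => seg ρ (fun k => x k i) m : Fin N → Fin (ρ + 1) → Y)‖ ≤
        (1 / (1 - lam)) * a' m n * ‖α‖ := by
  have h1lam : (0:ℝ) < 1 - lam := by linarith
  set C : ℝ := 1 / (1 - lam) with hCdef
  have hCpos : 0 < C := by positivity
  have hRHSnonneg : ∀ m, n ≤ m → 0 ≤ C * a' m n * ‖α‖ := fun m hm => by
    have := ha'pos m n hn hm
    positivity
  -- trivial case: every tuple is zero
  by_cases htriv : ∀ u : Fin N → Fin (ρ + 1) → Y, u = 0
  · intro m hm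
    rw [htriv (fun i => seg ρ (fun k => x k i) m), norm_zero]
    exact hRHSnonneg m hm
  push_neg at htriv
  obtain ⟨u0, hu0⟩ := htriv
  have hLf : ∀ k i, 0 ≤ Lf k i := by
    intro k i
    have h1 := hfLip k i u0 0
    have h2 : (0:ℝ) < ‖u0‖ := norm_pos_iff.2 hu0
    have h3 : (0:ℝ) ≤ ‖f k u0 i - f k 0 i‖ := norm_nonneg _
    rw [sub_zero] at h1
    nlinarith
  -- notation
  set U : ℤ → (Fin N → Fin (ρ + 1) → Y) := fun k i' => seg ρ (fun t => x t i') k with hU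
  set g : ℤ → Fin N → Y := fun k i => f k (U k) i with hg
  -- evolution step property of A
  have hAstep : ∀ (i : Fin N) (n' : ℤ) (z : Fin (ρ + 1) → Y) (m : ℤ), n' ≤ m →
      A (m + 1) n' i z = shiftL ρ (L m i) (A m n' i z) := by
    intro i n' z m hm
    obtain ⟨v, hv0, hvrec, hvA⟩ := hA i n' z
    rw [hvA (m + 1) (by linarith), hvA m hm]
    exact seg_shift ρ (L m i) v m (hvrec m hm)
  have hAid : ∀ (i : Fin N) (n' : ℤ) (z : Fin (ρ + 1) → Y), A n' n' i z = z := by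
    intro i n' z
    obtain ⟨v, hv0, hvrec, hvA⟩ := hA i n' z
    rw [hvA n' le_rfl]
    funext j
    exact hv0 j
  -- nonlinear step property
  have hxstep : ∀ m, n ≤ m → ∀ i, U (m + 1) i =
      shiftL ρ (L m i) (U m i) + ins ρ (g m i) := by
    intro m hm i
    funext j
    by_cases hj : (j : ℕ) < ρ
    · show seg ρ (fun t => x t i) (m + 1) j = _
      rw [seg_succ_of_lt ρ _ m j hj]
      simp [shiftL, ins, hj]
      rfl
    · show seg ρ (fun t => x t i) (m + 1) j = _
      rw [seg_succ_of_top ρ _ m j hj]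
      simp only [Pi.add_apply, shiftL, LinearMap.coe_mk, AddHom.coe_mk, ins, if_neg hj,
        dif_neg hj]
      exact heq m hm i
  -- variation of constants formula
  have hform : ∀ m, n ≤ m → ∀ i, U m i =
      A m n i (α i) + ∑ k ∈ Finset.Ico n m, A m (k + 1) i (ins ρ (g k i)) := by
    refine Int.le_induction ?_ ?_
    · intro i
      rw [Finset.Ico_self, Finset.sum_empty, add_zero, hAid]
      funext j
      exact hinit i j
    · intro m hm ih i
      rw [hxstep m hm i, ih i, map_add, map_sum]
      rw [sum_Ico_succ_top_int n m hm]
      rw [hAstep i n (α i) m hm]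
      have hterm : ∀ k ∈ Finset.Ico n m,
          shiftL ρ (L m i) (A m (k + 1) i (ins ρ (g k i)))
            = A (m + 1) (k + 1) i (ins ρ (g k i)) := by
        intro k hk
        rw [Finset.mem_Ico] at hk
        rw [hAstep i (k + 1) _ m (by linarith [hk.2])]
      rw [Finset.sum_congr rfl hterm, hAid i (m + 1)]
      abel
  -- main bound, by strong induction
  have comp : ∀ m, n ≤ m →
      (∀ k, n ≤ k → k < m → ‖U k‖ ≤ C * a' k n * ‖α‖) →
      ‖U m‖ ≤ C * a' m n * ‖α‖ := by
    intro m hm IH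
    refine (pi_norm_le_iff_of_nonneg (hRHSnonneg m hm)).2 fun i => ?_
    rw [hform m hm i]
    have hbase : ‖A m n i (α i)‖ ≤ a' m n * ‖α‖ := by
      calc ‖A m n i (α i)‖ ≤ ‖A m n i‖ * ‖α i‖ := (A m n i).le_opNorm _
        _ ≤ a' m n * ‖α‖ := by
            apply mul_le_mul ((haA m n i hm).trans (haa' m n i hm))
              (norm_le_pi_norm α i) (norm_nonneg _)
            exact le_of_lt (ha'pos m n hn hm)
    have hterm : ∀ k ∈ Finset.Ico n m,
        ‖A m (k + 1) i (ins ρ (g k i))‖ ≤ aa m (k + 1) i * Lf k i * a' k n * (C * ‖α‖) := by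
      intro k hk
      rw [Finset.mem_Ico] at hk
      have hk1m : k + 1 ≤ m := hk.2
      have haann : 0 ≤ aa m (k + 1) i := (norm_nonneg _).trans (haA m (k + 1) i hk1m)
      have hgk : ‖g k i‖ ≤ Lf k i * ‖U k‖ := by
        have := hfLip k i (U k) 0
        rw [hf0, sub_zero, sub_zero] at this
        exact this
      have hUk : ‖U k‖ ≤ C * a' k n * ‖α‖ := IH k hk.1 (by linarith [hk.2])
      calc ‖A m (k + 1) i (ins ρ (g k i))‖
          ≤ ‖A m (k + 1) i‖ * ‖ins ρ (g k i)‖ := (A m (k + 1) i).le_opNorm _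
        _ ≤ aa m (k + 1) i * ‖g k i‖ :=
            mul_le_mul (haA m (k + 1) i hk1m) (ins_norm_le ρ _) (norm_nonneg _)
              haann
        _ ≤ aa m (k + 1) i * (Lf k i * (C * a' k n * ‖α‖)) := by
            refine mul_le_mul_of_nonneg_left (hgk.trans ?_) haann
            exact mul_le_mul_of_nonneg_left hUk (hLf k i)
        _ = aa m (k + 1) i * Lf k i * a' k n * (C * ‖α‖) := by ring
    have hsum : ∑ k ∈ Finset.Ico n m, ‖A m (k + 1) i (ins ρ (g k i))‖
        ≤ lam * a' m n * (C * ‖α‖) := by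
      calc ∑ k ∈ Finset.Ico n m, ‖A m (k + 1) i (ins ρ (g k i))‖
          ≤ ∑ k ∈ Finset.Ico n m, aa m (k + 1) i * Lf k i * a' k n * (C * ‖α‖) :=
            Finset.sum_le_sum hterm
        _ = (∑ k ∈ Finset.Ico n m, aa m (k + 1) i * Lf k i * a' k n) * (C * ‖α‖) := by
            rw [Finset.sum_mul]
        _ ≤ (lam * a' m n) * (C * ‖α‖) := by
            have hsle : (∑ k ∈ Finset.Ico n m, aa m (k + 1) i * Lf k i * a' k n)
                ≤ lam * a' m n := by
              have h := hlam i m n hn hm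
              have hap := ha'pos m n hn hm
              rw [one_div, inv_mul_le_iff₀ hap] at h
              linarith [h]
            refine mul_le_mul_of_nonneg_right hsle ?_
            positivity
        _ = lam * a' m n * (C * ‖α‖) := by ring
    calc ‖A m n i (α i) + ∑ k ∈ Finset.Ico n m, A m (k + 1) i (ins ρ (g k i))‖
        ≤ ‖A m n i (α i)‖ + ‖∑ k ∈ Finset.Ico n m, A m (k + 1) i (ins ρ (g k i))‖ :=
          norm_add_le _ _
      _ ≤ ‖A m n i (α i)‖ + ∑ k ∈ Finset.Ico n m, ‖A m (k + 1) i (ins ρ (g k i))‖ := by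
          gcongr
          exact norm_sum_le _ _
      _ ≤ a' m n * ‖α‖ + lam * a' m n * (C * ‖α‖) := add_le_add hbase hsum
      _ = C * a' m n * ‖α‖ := by
          rw [hCdef]; field_simp; ring
  have key : ∀ m, n ≤ m → ∀ k, n ≤ k → k ≤ m → ‖U k‖ ≤ C * a' k n * ‖α‖ := by
    refine Int.le_induction ?_ ?_
    · intro k hk1 hk2
      have hkn : k = n := le_antisymm hk2 hk1
      subst hkn
      exact comp k le_rfl (fun j hj1 hj2 => absurd (hj1.trans_lt hj2) (lt_irrefl _))
    · intro m hm ih k hk1 hk2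
      rcases lt_or_eq_of_le hk2 with h | h
      · exact ih k hk1 (by linarith)
      · subst h
        exact comp (m + 1) (by linarith) (fun j hj1 hj2 => ih j hj1 (by linarith))
  intro m hm
  exact key m hm m hm le_rfl
end

section
/- Consider the difference equation x_i(m+1) = x_i(m) e^{-a_i(m)h} + θ_i(m) [ Σ_{j=1}^N b_{ij}(m) f_j(x_j(m-τ(m))) + I_i(m) ], i=1,…,N, where h > 0, a_i, b_{ij}, I_i, τ : ℕ₀ → ℝ are bounded, a_i(m) > 0, 0 ≤ τ(m) ≤ τ, θ_i(m) = (1 − e^{-a_i(m)h})/a_i(m), and each f_j : ℝ → ℝ is Lipschitz with constant F_j > 0. If a_i^- > Σ_{j=1}^N b_{ij}^+ F_j for every i = 1,…,N, where a_i^- = inf_m a_i(m) and b_{ij}^+ = sup_m |b_{ij}(m)|, then the model is globally exponentially stable: there exist constants μ > 0 and C > 1 such that ‖x̄_m(·,n,ᾱ) − x̄_m(·,n,ᾱ*)‖ ≤ C e^{-μ(m-n)} ‖ᾱ − ᾱ*‖ for all initial segments ᾱ, ᾱ* : [-τ,0]∩ℤ → ℝ^N and all m ≥ n ≥ 0. 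-/
/-- The norm of the segment of `u` at time `m`, with maximum delay `τ`:
`max_{i} max_{j = -τ,…,0} |u(m+j)_i|` (the norm on `Fin N → ℝ` is the sup norm). -/
noncomputable def segNorm {N : ℕ} (τ : ℕ) (u : ℤ → Fin N → ℝ) (m : ℤ) : ℝ :=
  (Finset.Icc (m - τ) m).sup' (Finset.nonempty_Icc.mpr (by omega)) fun k => ‖u k‖

/-- Global exponential stability of the discretized Hopfield model
`x_i(m+1) = x_i(m) e^{-a_i(m)h} + θ_i(m)[Σ_j b_{ij}(m) f_j(x_j(m-τ(m))) + I_i(m)]`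
under the diagonal dominance condition `a_i^- > Σ_j b_{ij}^+ F_j`. -/
theorem stmt2 {N τ : ℕ} (h : ℝ) (hh : 0 < h)
    (a : ℤ → Fin N → ℝ) (b : ℤ → Fin N → Fin N → ℝ) (I : ℤ → Fin N → ℝ)
    (τd : ℤ → ℕ) (hτd : ∀ m, τd m ≤ τ)
    (f : Fin N → ℝ → ℝ) (F : Fin N → ℝ) (hF : ∀ j, 0 < F j)
    (hfLip : ∀ j u v, |f j u - f j v| ≤ F j * |u - v|)
    (ha_pos : ∀ m i, 0 < a m i)
    (haUB : ∃ A, ∀ m i, a m i ≤ A)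
    (hI : ∃ J, ∀ m i, |I m i| ≤ J)
    (aminus : Fin N → ℝ) (bplus : Fin N → Fin N → ℝ)
    (ha_inf : ∀ i, IsGLB (Set.range fun m => a m i) (aminus i))
    (hb_sup : ∀ i j, IsLUB (Set.range fun m => |b m i j|) (bplus i j))
    (hyp : ∀ i, ∑ j, bplus i j * F j < aminus i) :
    ∃ μ > (0 : ℝ), ∃ C > (1 : ℝ), ∀ n : ℤ, 0 ≤ n → ∀ x y : ℤ → Fin N → ℝ,
      (∀ m, n ≤ m → ∀ i,
        x (m + 1) i = x m i * Real.exp (-(a m i) * h) +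
          ((1 - Real.exp (-(a m i) * h)) / a m i) *
            ((∑ j, b m i j * f j (x (m - τd m) j)) + I m i)) →
      (∀ m, n ≤ m → ∀ i,
        y (m + 1) i = y m i * Real.exp (-(a m i) * h) +
          ((1 - Real.exp (-(a m i) * h)) / a m i) *
            ((∑ j, b m i j * f j (y (m - τd m) j)) + I m i)) →
      ∀ m, n ≤ m →
        segNorm τ (fun k i => x k i - y k i) m ≤
          C * Real.exp (-μ * ((m : ℝ) - n)) * segNorm τ (fun k i => x k i - y k i) n := by
  rcases Nat.eq_zero_or_pos N with hN | hN
  · subst hN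
    have hzero : ∀ (u : ℤ → Fin 0 → ℝ) (m : ℤ), segNorm τ u m = 0 := by
      intro u m
      have hz : ∀ k, ‖u k‖ = 0 := fun k => by
        have : u k = 0 := funext fun i => i.elim0
        rw [this, norm_zero]
      refine le_antisymm (Finset.sup'_le _ _ fun k _ => (hz k).le) ?_
      exact (norm_nonneg (u m)).trans
        (Finset.le_sup' (fun k : ℤ => ‖u k‖) (Finset.mem_Icc.mpr ⟨by omega, le_rfl⟩))
    refine ⟨1, one_pos, 2, one_lt_two, fun n hn x y hx hy m hm => ?_⟩
    rw [hzero, hzero]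
    simp
  haveI : Nonempty (Fin N) := Fin.pos_iff_nonempty.mp hN
  have hNe : (Finset.univ : Finset (Fin N)).Nonempty := Finset.univ_nonempty
  set S : Fin N → ℝ := fun i => ∑ j, bplus i j * F j with hS
  have hbp : ∀ i j, 0 ≤ bplus i j := fun i j =>
    le_trans (abs_nonneg _) ((hb_sup i j).1 (Set.mem_range_self 0))
  have hSnn : ∀ i, 0 ≤ S i := fun i => Finset.sum_nonneg fun j _ =>
    mul_nonneg (hbp i j) (hF j).le
  have ham : ∀ i, 0 < aminus i := fun i => lt_of_le_of_lt (hSnn i) (hyp i)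
  have hale : ∀ m i, aminus i ≤ a m i := fun m i => (ha_inf i).1 (Set.mem_range_self m)
  set q : Fin N → ℝ := fun i => S i / aminus i with hq
  have hq0 : ∀ i, 0 ≤ q i := fun i => div_nonneg (hSnn i) (ham i).le
  have hq1 : ∀ i, q i < 1 := fun i => (div_lt_one (ham i)).mpr (hyp i)
  set lami : Fin N → ℝ := fun i => q i + (1 - q i) * Real.exp (-(aminus i) * h) with hlami
  set lam : ℝ := Finset.univ.sup' hNe lami with hlam
  have hEi : ∀ i, Real.exp (-(aminus i) * h) < 1 := fun i => by
    rw [← Real.exp_zero]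
    exact Real.exp_lt_exp.mpr (by nlinarith [ham i])
  have hlami0 : ∀ i, 0 < lami i := fun i => by
    have h1 := Real.exp_pos (-(aminus i) * h)
    have h2 := hq1 i; have h3 := hq0 i
    simp only [hlami]; nlinarith
  have hlami1 : ∀ i, lami i < 1 := fun i => by
    have h1 := hEi i
    have h2 := hq1 i
    have h3 := (Real.exp_pos (-(aminus i) * h)).le
    simp only [hlami]; nlinarith
  have hlam0 : 0 < lam :=
    lt_of_lt_of_le (hlami0 ⟨0, hN⟩) (Finset.le_sup' _ (Finset.mem_univ _))
  have hlam1 : lam < 1 := (Finset.sup'_lt_iff hNe).mpr fun i _ => hlami1 i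
  have hloglam : Real.log lam < 0 := Real.log_neg hlam0 hlam1
  refine ⟨-Real.log lam / (τ + 1), div_pos (neg_pos.mpr hloglam) (by positivity), 1 / lam,
    ?_, ?_⟩
  · rw [gt_iff_lt, lt_div_iff₀ hlam0]; linarith
  intro n hn x y hx hy
  set z : ℤ → Fin N → ℝ := fun k i => x k i - y k i with hzdef
  have hVmem : ∀ m k : ℤ, m - τ ≤ k → k ≤ m → ‖z k‖ ≤ segNorm τ z m := fun m k h1 h2 =>
    Finset.le_sup' (fun k => ‖z k‖) (Finset.mem_Icc.mpr ⟨h1, h2⟩)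
  have hVnn : ∀ m : ℤ, 0 ≤ segNorm τ z m := fun m =>
    (norm_nonneg (z m)).trans (hVmem m m (by omega) le_rfl)
  have habs : ∀ m k : ℤ, m - τ ≤ k → k ≤ m → ∀ j, |z k j| ≤ segNorm τ z m := fun m k h1 h2 j =>
    le_trans (by simpa using norm_le_pi_norm (z k) j) (hVmem m k h1 h2)
  have step : ∀ m : ℤ, n ≤ m → ‖z (m + 1)‖ ≤ lam * segNorm τ z m := by
    intro m hm
    have hc : 0 ≤ lam * segNorm τ z m := mul_nonneg hlam0.le (hVnn m)
    rw [pi_norm_le_iff_of_nonneg hc]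
    intro i
    rw [Real.norm_eq_abs]
    set E := Real.exp (-(a m i) * h) with hE
    have hE0 : 0 < E := Real.exp_pos _
    have hE1 : E ≤ 1 := by
      rw [hE, ← Real.exp_zero]
      exact Real.exp_le_exp.mpr (by nlinarith [ha_pos m i])
    have hzrec : z (m + 1) i = z m i * E + ((1 - E) / a m i) *
        (∑ j, b m i j * (f j (x (m - τd m) j) - f j (y (m - τd m) j))) := by
      simp only [hzdef]
      rw [hx m hm i, hy m hm i]
      simp only [mul_sub, Finset.sum_sub_distrib]
      ring
    have hτm1 : m - (τ : ℤ) ≤ m - τd m := by have := hτd m; omega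
    have hτm2 : m - (τd m : ℤ) ≤ m := by omega
    have hsum : |∑ j, b m i j * (f j (x (m - τd m) j) - f j (y (m - τd m) j))| ≤
        S i * segNorm τ z m := by
      calc |∑ j, b m i j * (f j (x (m - τd m) j) - f j (y (m - τd m) j))|
          ≤ ∑ j, |b m i j * (f j (x (m - τd m) j) - f j (y (m - τd m) j))| :=
            Finset.abs_sum_le_sum_abs _ _
        _ ≤ ∑ j, bplus i j * F j * segNorm τ z m := by
            apply Finset.sum_le_sum
            intro j _
            rw [abs_mul]
            have hb : |b m i j| ≤ bplus i j := (hb_sup i j).1 (Set.mem_range_self m)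
            have hf : |f j (x (m - τd m) j) - f j (y (m - τd m) j)| ≤
                F j * |z (m - τd m) j| := by
              have := hfLip j (x (m - τd m) j) (y (m - τd m) j)
              simpa [hzdef] using this
            have hzb : |z (m - τd m) j| ≤ segNorm τ z m := habs m _ hτm1 hτm2 j
            have hf2 : |f j (x (m - τd m) j) - f j (y (m - τd m) j)| ≤
                F j * segNorm τ z m :=
              hf.trans (mul_le_mul_of_nonneg_left hzb (hF j).le)
            calc |b m i j| * |f j (x (m - τd m) j) - f j (y (m - τd m) j)|
                ≤ bplus i j * (F j * segNorm τ z m) :=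
                  mul_le_mul hb hf2 (abs_nonneg _) (hbp i j)
              _ = bplus i j * F j * segNorm τ z m := by ring
        _ = S i * segNorm τ z m := by rw [hS, ← Finset.sum_mul]
    have hθ : 0 ≤ (1 - E) / a m i := div_nonneg (by linarith) (ha_pos m i).le
    have hza : |z m i| ≤ segNorm τ z m := habs m m (by omega) le_rfl i
    have hdiv : S i / a m i ≤ q i := by
      rw [hq]
      exact div_le_div_of_nonneg_left (hSnn i) (ham i) (hale m i)
    have key1 : |z (m + 1) i| ≤ |z m i| * E + ((1 - E) / a m i) * (S i * segNorm τ z m) := by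
      rw [hzrec]
      calc |z m i * E + ((1 - E) / a m i) *
            (∑ j, b m i j * (f j (x (m - τd m) j) - f j (y (m - τd m) j)))|
          ≤ |z m i * E| + |((1 - E) / a m i) *
            (∑ j, b m i j * (f j (x (m - τd m) j) - f j (y (m - τd m) j)))| := abs_add_le _ _
        _ ≤ |z m i| * E + ((1 - E) / a m i) * (S i * segNorm τ z m) := by
            rw [abs_mul, abs_mul, abs_of_pos hE0, abs_of_nonneg hθ]
            exact add_le_add le_rfl (mul_le_mul_of_nonneg_left hsum hθ)
    have key2 : |z (m + 1) i| ≤ (q i + (1 - q i) * E) * segNorm τ z m := by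
      have h2 : ((1 - E) / a m i) * (S i * segNorm τ z m) ≤
          (1 - E) * (q i * segNorm τ z m) := by
        have heq : ((1 - E) / a m i) * (S i * segNorm τ z m) =
            (1 - E) * ((S i / a m i) * segNorm τ z m) := by ring
        rw [heq]
        exact mul_le_mul_of_nonneg_left
          (mul_le_mul_of_nonneg_right hdiv (hVnn m)) (by linarith)
      have h3 : |z m i| * E ≤ segNorm τ z m * E :=
        mul_le_mul_of_nonneg_right hza hE0.le
      calc |z (m + 1) i| ≤ |z m i| * E + ((1 - E) / a m i) * (S i * segNorm τ z m) := key1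
        _ ≤ segNorm τ z m * E + (1 - E) * (q i * segNorm τ z m) := by linarith
        _ = (q i + (1 - q i) * E) * segNorm τ z m := by ring
    have key3 : q i + (1 - q i) * E ≤ lam := by
      have hEle : E ≤ Real.exp (-(aminus i) * h) := by
        rw [hE]
        exact Real.exp_le_exp.mpr (by nlinarith [hale m i])
      have h1 : q i + (1 - q i) * E ≤ lami i := by
        have h4 : (0 : ℝ) ≤ 1 - q i := by linarith [hq1 i]
        simp only [hlami]
        nlinarith
      exact h1.trans (Finset.le_sup' lami (Finset.mem_univ i))
    calc |z (m + 1) i| ≤ (q i + (1 - q i) * E) * segNorm τ z m := key2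
      _ ≤ lam * segNorm τ z m := mul_le_mul_of_nonneg_right key3 (hVnn m)
  have mono1 : ∀ m : ℤ, n ≤ m → segNorm τ z (m + 1) ≤ segNorm τ z m := by
    intro m hm
    apply Finset.sup'_le
    intro k hk
    rw [Finset.mem_Icc] at hk
    rcases eq_or_lt_of_le hk.2 with hk2 | hk2
    · rw [hk2]
      calc ‖z (m + 1)‖ ≤ lam * segNorm τ z m := step m hm
        _ ≤ 1 * segNorm τ z m := mul_le_mul_of_nonneg_right hlam1.le (hVnn m)
        _ = segNorm τ z m := one_mul _
    · exact hVmem m k (by omega) (by omega)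
  have mono : ∀ m m' : ℤ, n ≤ m → m ≤ m' → segNorm τ z m' ≤ segNorm τ z m := by
    intro m m' hm hmm'
    refine Int.le_induction (motive := fun m' _ => segNorm τ z m' ≤ segNorm τ z m) le_rfl ?_ m' hmm'
    intro k hk ih
    exact (mono1 k (hm.trans hk)).trans ih
  have block : ∀ m : ℤ, n ≤ m → segNorm τ z (m + (τ + 1)) ≤ lam * segNorm τ z m := by
    intro m hm
    apply Finset.sup'_le
    intro k hk
    rw [Finset.mem_Icc] at hk
    have hk1 : m + 1 ≤ k := by omega
    have hkk : k - 1 + 1 = k := by ring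
    calc ‖z k‖ = ‖z (k - 1 + 1)‖ := by rw [hkk]
      _ ≤ lam * segNorm τ z (k - 1) := step (k - 1) (by omega)
      _ ≤ lam * segNorm τ z m :=
          mul_le_mul_of_nonneg_left (mono m (k - 1) hm (by omega)) hlam0.le
  have iter : ∀ s : ℕ, segNorm τ z (n + (τ + 1) * s) ≤ lam ^ s * segNorm τ z n := by
    intro s
    induction s with
    | zero => simp
    | succ s ih =>
      have h1 : n + ((τ : ℤ) + 1) * ((s : ℤ) + 1) = (n + (τ + 1) * s) + (τ + 1) := by ring
      have h0 : (0 : ℤ) ≤ ((τ : ℤ) + 1) * s := by positivity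
      calc segNorm τ z (n + (τ + 1) * ((s : ℕ) + 1 : ℕ))
          = segNorm τ z ((n + (τ + 1) * s) + (τ + 1)) := by rw [← h1]; push_cast; ring_nf
        _ ≤ lam * segNorm τ z (n + (τ + 1) * s) := block _ (by omega)
        _ ≤ lam * (lam ^ s * segNorm τ z n) := mul_le_mul_of_nonneg_left ih hlam0.le
        _ = lam ^ (s + 1) * segNorm τ z n := by ring
  intro m hm
  set d : ℤ := m - n with hd
  have hd0 : 0 ≤ d := by omega
  have hτ1 : (0 : ℤ) < (τ : ℤ) + 1 := by positivity
  set s : ℕ := (d / ((τ : ℤ) + 1)).toNat with hs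
  have hsd : (s : ℤ) = d / ((τ : ℤ) + 1) :=
    Int.toNat_of_nonneg (Int.ediv_nonneg hd0 hτ1.le)
  have hmod1 : 0 ≤ d % ((τ : ℤ) + 1) := Int.emod_nonneg d (by omega)
  have hmod2 : d % ((τ : ℤ) + 1) < (τ : ℤ) + 1 := Int.emod_lt_of_pos d hτ1
  have hdm := Int.mul_ediv_add_emod d ((τ : ℤ) + 1)
  have h1 : ((τ : ℤ) + 1) * (s : ℤ) ≤ d := by rw [hsd]; linarith
  have h2 : d < ((τ : ℤ) + 1) * ((s : ℤ) + 1) := by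
    rw [hsd]
    have : ((τ : ℤ) + 1) * (d / ((τ : ℤ) + 1) + 1) =
        ((τ : ℤ) + 1) * (d / ((τ : ℤ) + 1)) + ((τ : ℤ) + 1) := by ring
    linarith
  have h0s : (0 : ℤ) ≤ ((τ : ℤ) + 1) * (s : ℤ) := by positivity
  have hmono : segNorm τ z m ≤ segNorm τ z (n + (τ + 1) * s) :=
    mono (n + (τ + 1) * s) m (by linarith) (by linarith)
  have hlog : lam ^ s = Real.exp ((s : ℝ) * Real.log lam) := by
    rw [Real.exp_nat_mul, Real.exp_log hlam0]
  have hsge : ((d : ℝ) / ((τ : ℝ) + 1) - 1) < (s : ℝ) := by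
    have h2' : (d : ℝ) < ((τ : ℝ) + 1) * ((s : ℝ) + 1) := by exact_mod_cast h2
    have hτR : (0 : ℝ) < (τ : ℝ) + 1 := by positivity
    have : (d : ℝ) / ((τ : ℝ) + 1) < (s : ℝ) + 1 :=
      (div_lt_iff₀ hτR).mpr (by linarith)
    linarith
  have hexp : (s : ℝ) * Real.log lam ≤ ((d : ℝ) / ((τ : ℝ) + 1) - 1) * Real.log lam := by
    nlinarith [hsge, hloglam]
  have hμeq : ((d : ℝ) / ((τ : ℝ) + 1) - 1) * Real.log lam =
      -(-Real.log lam / ((τ : ℝ) + 1)) * (d : ℝ) - Real.log lam := by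
    field_simp
  have hfin : lam ^ s ≤ (1 / lam) * Real.exp (-(-Real.log lam / ((τ : ℝ) + 1)) * (d : ℝ)) := by
    rw [hlog]
    calc Real.exp ((s : ℝ) * Real.log lam)
        ≤ Real.exp (((d : ℝ) / ((τ : ℝ) + 1) - 1) * Real.log lam) :=
          Real.exp_le_exp.mpr hexp
      _ = (1 / lam) * Real.exp (-(-Real.log lam / ((τ : ℝ) + 1)) * (d : ℝ)) := by
          rw [hμeq, Real.exp_sub, Real.exp_log hlam0]; ring
  have hdR : (m : ℝ) - (n : ℝ) = (d : ℝ) := by rw [hd]; push_cast; ring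
  calc segNorm τ z m ≤ lam ^ s * segNorm τ z n := hmono.trans (iter s)
    _ ≤ (1 / lam) * Real.exp (-(-Real.log lam / ((τ : ℝ) + 1)) * ((m : ℝ) - (n : ℝ))) *
        segNorm τ z n := by
        rw [hdR]
        exact mul_le_mul_of_nonneg_right hfin (hVnn n)
end

section
/- Consider the model x_i(m+1) = x_i(m) e^{-a_i(m)h} + θ_i(m)[Σ_{j=1}^N b_{ij}(m) f_j(x_j(m-τ(m))) + I_i(m)] with bounded coefficients, a_i(m) > 0, θ_i(m) = (1−e^{-a_i(m)h})/a_i(m), and f_j Lipschitz with constant F_j > 0. Define the N×N matrix M = diag(a_1^-,…,a_N^-) − [b_{ij}^+ F_j], where a_i^- = inf_m a_i(m) and b_{ij}^+ = sup_m |b_{ij}(m)|. If M is an M-matrix, then the model is globally exponentially stable: there exist μ > 0 and C > 1 such that ‖x̄_m(·,n,ᾱ) − x̄_m(·,n,ᾱ*)‖ ≤ C e^{-μ(m-n)} ‖ᾱ − ᾱ*‖ for all initial segments ᾱ, ᾱ* and all m ≥ n ≥ 0. -/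
set_option maxHeartbeats 1000000

open Matrix

/-- A square real matrix is an M-matrix if its off-diagonal entries are nonpositive
and all of its (complex) eigenvalues have positive real part. -/
def IsMMatrix {N : ℕ} (M : Matrix (Fin N) (Fin N) ℝ) : Prop :=
  (∀ i j, i ≠ j → M i j ≤ 0) ∧
  ∀ z ∈ spectrum ℂ (M.map (Complex.ofReal)), 0 < z.re

/-- Entrywise bounds for powers of an entrywise-nonnegative matrix. -/
lemma pow_entry_bounds {N : ℕ} (Q : Matrix (Fin N) (Fin N) ℝ) (hQ : ∀ i j, 0 ≤ Q i j)
    (c : ℝ) (hc : ∀ i j, Q i j ≤ c) (k : ℕ) :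
    ∀ i j, 0 ≤ (Q ^ k) i j ∧ (Q ^ k) i j ≤ ((N : ℝ) * c) ^ k := by
  induction k with
  | zero =>
    intro i j
    constructor
    · simp only [pow_zero, Matrix.one_apply]
      split <;> norm_num
    · simp only [pow_zero, Matrix.one_apply]
      split <;> norm_num
  | succ k ih =>
    intro i j
    have hc0 : 0 ≤ c := le_trans (hQ i j) (hc i j)
    have hpow : (Q ^ (k+1)) i j = ∑ l, (Q ^ k) i l * Q l j := by
      rw [pow_succ, Matrix.mul_apply]
    constructor
    · rw [hpow]
      exact Finset.sum_nonneg fun l _ => mul_nonneg (ih i l).1 (hQ l j)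
    · rw [hpow]
      calc ∑ l, (Q ^ k) i l * Q l j ≤ ∑ _l : Fin N, ((N : ℝ) * c) ^ k * c := by
            apply Finset.sum_le_sum
            intro l _
            exact mul_le_mul (ih i l).2 (hc l j) (hQ l j)
              (pow_nonneg (mul_nonneg (Nat.cast_nonneg N) hc0) k)
        _ = ((N : ℝ) * c) ^ (k + 1) := by
            rw [Finset.sum_const, Finset.card_univ, Fintype.card_fin]
            push_cast
            ring

/-- Geometric series right inverse of `1 - ρ • Q` with nonnegative entries. -/
lemma geom_right_inverse {N : ℕ} (Q : Matrix (Fin N) (Fin N) ℝ) (hQ : ∀ i j, 0 ≤ Q i j)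
    (c : ℝ) (hc : ∀ i j, Q i j ≤ c) (ρ : ℝ) (hρ0 : 0 ≤ ρ) (hρc0 : 0 ≤ (N : ℝ) * c)
    (hρ : ρ * ((N : ℝ) * c) < 1) :
    ∃ S : Matrix (Fin N) (Fin N) ℝ, (∀ i j, 0 ≤ S i j) ∧ (1 - ρ • Q) * S = 1 := by
  have hr0 : 0 ≤ ρ * ((N : ℝ) * c) := mul_nonneg hρ0 hρc0
  have hgeom : Summable fun k : ℕ => (ρ * ((N : ℝ) * c)) ^ k :=
    summable_geometric_of_lt_one hr0 hρ
  have hsum : ∀ i j, Summable fun k : ℕ => ρ ^ k * (Q ^ k) i j := by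
    intro i j
    apply Summable.of_nonneg_of_le
      (fun k => mul_nonneg (pow_nonneg hρ0 k) (pow_entry_bounds Q hQ c hc k i j).1)
      (fun k => ?_) hgeom
    rw [mul_pow]
    exact mul_le_mul_of_nonneg_left (pow_entry_bounds Q hQ c hc k i j).2 (pow_nonneg hρ0 k)
  refine ⟨Matrix.of fun i j => ∑' k, ρ ^ k * (Q ^ k) i j, fun i j => tsum_nonneg fun k =>
    mul_nonneg (pow_nonneg hρ0 k) (pow_entry_bounds Q hQ c hc k i j).1, ?_⟩
  ext i j
  have e0 : ((1 - ρ • Q) * Matrix.of fun i j => ∑' k, ρ ^ k * (Q ^ k) i j) i j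
      = ∑ l, (1 - ρ • Q) i l * ∑' k, ρ ^ k * (Q ^ k) l j := by
    rw [Matrix.mul_apply]; rfl
  rw [e0]
  have e1 : ∀ l : Fin N, (1 - ρ • Q) i l * ∑' k, ρ ^ k * (Q ^ k) l j
      = ∑' k, (1 - ρ • Q) i l * (ρ ^ k * (Q ^ k) l j) :=
    fun l => ((hsum l j).tsum_mul_left _).symm
  simp_rw [e1]
  rw [← Summable.tsum_finsetSum (fun l _ => (hsum l j).mul_left _)]
  have e2 : ∀ k : ℕ, ∑ l, (1 - ρ • Q) i l * (ρ ^ k * (Q ^ k) l j)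
      = ρ ^ k * (Q ^ k) i j - ρ ^ (k+1) * (Q ^ (k+1)) i j := by
    intro k
    have l1 : ∑ l, (1 - ρ • Q) i l * (ρ ^ k * (Q ^ k) l j)
        = ρ ^ k * ((1 - ρ • Q) * Q ^ k) i j := by
      rw [Matrix.mul_apply, Finset.mul_sum]
      exact Finset.sum_congr rfl fun l _ => by ring
    have l2 : (1 - ρ • Q) * Q ^ k = Q ^ k - ρ • Q ^ (k+1) := by
      rw [Matrix.sub_mul, Matrix.one_mul, smul_mul_assoc, ← pow_succ']
    rw [l1, l2]
    simp only [Matrix.sub_apply, Matrix.smul_apply, smul_eq_mul]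
    ring
  simp_rw [e2]
  have hshift : Summable fun k : ℕ => ρ ^ (k+1) * (Q ^ (k+1)) i j :=
    (summable_nat_add_iff 1).2 (hsum i j)
  rw [Summable.tsum_sub (hsum i j) hshift]
  have := Summable.tsum_eq_zero_add (hsum i j)
  rw [this]
  simp [Matrix.one_apply]

lemma mmatrix_exists_pos_vec {N : ℕ} (M₀ : Matrix (Fin N) (Fin N) ℝ)
    (hoff : ∀ i j, i ≠ j → M₀ i j ≤ 0)
    (hspec : ∀ z ∈ spectrum ℂ (M₀.map Complex.ofReal), 0 < z.re) :
    ∃ ξ : Fin N → ℝ, (∀ i, 0 < ξ i) ∧ ∀ i, 0 < (M₀.mulVec ξ) i := by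
  classical
  set s : ℝ := 1 + ∑ i, |M₀ i i| with hs_def
  have hsum_nonneg : 0 ≤ ∑ i, |M₀ i i| := Finset.sum_nonneg fun i _ => abs_nonneg _
  have hs1 : 1 ≤ s := by simp only [hs_def]; linarith
  have hs0 : 0 < s := by linarith
  set P : Matrix (Fin N) (Fin N) ℝ := s • (1 : Matrix (Fin N) (Fin N) ℝ) - M₀ with hP_def
  have hP : ∀ i j, 0 ≤ P i j := by
    intro i j
    simp only [hP_def, Matrix.sub_apply, Matrix.smul_apply, Matrix.one_apply, smul_eq_mul]
    by_cases hij : i = j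
    · subst hij
      simp only [if_pos rfl, mul_one]
      have h1 : |M₀ i i| ≤ ∑ k, |M₀ k k| :=
        Finset.single_le_sum (fun k _ => abs_nonneg (M₀ k k)) (Finset.mem_univ i)
      have h2 : M₀ i i ≤ |M₀ i i| := le_abs_self _
      simp only [hs_def, if_true]; linarith
    · simp only [if_neg hij, mul_zero]
      linarith [hoff i j hij]
  -- invertibility of t•1 - P for t ≥ s
  have hdet : ∀ t : ℝ, s ≤ t → IsUnit (t • (1 : Matrix (Fin N) (Fin N) ℝ) - P).det := by
    intro t ht
    by_contra hnu
    have hdet0 : (t • (1 : Matrix (Fin N) (Fin N) ℝ) - P).det = 0 := by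
      by_contra h0
      exact hnu (isUnit_iff_ne_zero.2 h0)
    have hdetC : ((t • (1 : Matrix (Fin N) (Fin N) ℝ) - P).map Complex.ofReal).det = 0 := by
      have : ((t • (1 : Matrix (Fin N) (Fin N) ℝ) - P).map Complex.ofReal)
          = Complex.ofRealHom.mapMatrix (t • (1 : Matrix (Fin N) (Fin N) ℝ) - P) := rfl
      rw [this, ← RingHom.map_det, hdet0, map_zero]
    have hnuC : ¬ IsUnit ((t • (1 : Matrix (Fin N) (Fin N) ℝ) - P).map Complex.ofReal) := by
      rw [Matrix.isUnit_iff_isUnit_det, hdetC]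
      exact fun hu => by simpa using hu.ne_zero
    have hmem : ((s : ℂ) - t) ∈ spectrum ℂ (M₀.map Complex.ofReal) := by
      rw [spectrum.mem_iff]
      intro hu
      apply hnuC
      have key : algebraMap ℂ (Matrix (Fin N) (Fin N) ℂ) ((s:ℂ) - t) - M₀.map Complex.ofReal
          = -((t • (1 : Matrix (Fin N) (Fin N) ℝ) - P).map Complex.ofReal) := by
        ext i j
        simp only [Matrix.sub_apply, Matrix.map_apply, Matrix.neg_apply, hP_def,
          Matrix.algebraMap_matrix_apply, Matrix.smul_apply, Matrix.one_apply, smul_eq_mul]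
        by_cases hij : i = j <;> simp [hij] <;> push_cast <;> ring
      rw [key] at hu
      simpa using hu.neg
    have := hspec _ hmem
    simp only [Complex.sub_re, Complex.ofReal_re] at this
    linarith
  -- entrywise bound for P
  set cP : ℝ := ∑ i, ∑ j, |P i j| with hcP_def
  have hcP0 : 0 ≤ cP := Finset.sum_nonneg fun i _ => Finset.sum_nonneg fun j _ => abs_nonneg _
  have hcP : ∀ i j, P i j ≤ cP := by
    intro i j
    calc P i j ≤ |P i j| := le_abs_self _
      _ ≤ ∑ j', |P i j'| := Finset.single_le_sum (f := fun j' => |P i j'|)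
          (fun k _ => abs_nonneg _) (Finset.mem_univ j)
      _ ≤ cP := Finset.single_le_sum
          (fun k (_ : k ∈ Finset.univ) => Finset.sum_nonneg fun j' _ => abs_nonneg (P k j'))
          (Finset.mem_univ i)
  have hNcP : (0:ℝ) ≤ (N : ℝ) * cP := mul_nonneg (Nat.cast_nonneg N) hcP0
  -- base case: nonnegativity of the resolvent far to the right
  have key0 : ∀ t : ℝ, s + (N : ℝ) * cP + 1 ≤ t →
      ∀ i j, 0 ≤ (t • (1 : Matrix (Fin N) (Fin N) ℝ) - P)⁻¹ i j := by
    intro t ht i j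
    have ht0 : 0 < t := by linarith
    have hρ : t⁻¹ * ((N : ℝ) * cP) < 1 := by
      rw [inv_mul_lt_iff₀ ht0, mul_one]
      linarith
    obtain ⟨S, hS0, hS1⟩ := geom_right_inverse P hP cP hcP t⁻¹ (inv_nonneg.2 ht0.le) hNcP hρ
    have hfact : t • (1 : Matrix (Fin N) (Fin N) ℝ) - P
        = t • ((1 : Matrix (Fin N) (Fin N) ℝ) - t⁻¹ • P) := by
      rw [smul_sub, smul_smul, mul_inv_cancel₀ ht0.ne', one_smul]
    have hri : (t • (1 : Matrix (Fin N) (Fin N) ℝ) - P) * (t⁻¹ • S) = 1 := by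
      rw [hfact, smul_mul_assoc, mul_smul_comm, hS1, smul_smul, mul_inv_cancel₀ ht0.ne', one_smul]
    rw [Matrix.inv_eq_right_inv hri, Matrix.smul_apply, smul_eq_mul]
    exact mul_nonneg (inv_nonneg.2 ht0.le) (hS0 i j)
  -- descent step
  have keyStep : ∀ b u : ℝ, s ≤ b → s ≤ u → u ≤ b →
      (∀ i j, 0 ≤ (b • (1 : Matrix (Fin N) (Fin N) ℝ) - P)⁻¹ i j) →
      (b - u) * ((N : ℝ) * (∑ i, ∑ j, |(b • (1 : Matrix (Fin N) (Fin N) ℝ) - P)⁻¹ i j|)) < 1 →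
      ∀ i j, 0 ≤ (u • (1 : Matrix (Fin N) (Fin N) ℝ) - P)⁻¹ i j := by
    intro b u hb hu hub hRb hsmall i j
    set Q : Matrix (Fin N) (Fin N) ℝ := (b • (1 : Matrix (Fin N) (Fin N) ℝ) - P)⁻¹ with hQ_def
    set cb : ℝ := ∑ i, ∑ j, |Q i j| with hcb_def
    have hcb : ∀ i j, Q i j ≤ cb := by
      intro i j
      calc Q i j ≤ |Q i j| := le_abs_self _
        _ ≤ ∑ j', |Q i j'| := Finset.single_le_sum (f := fun j' => |Q i j'|)
            (fun k _ => abs_nonneg _) (Finset.mem_univ j)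
        _ ≤ cb := Finset.single_le_sum
            (fun k (_ : k ∈ Finset.univ) => Finset.sum_nonneg fun j' _ => abs_nonneg (Q k j'))
            (Finset.mem_univ i)
    have hcb0 : 0 ≤ cb := Finset.sum_nonneg fun i _ => Finset.sum_nonneg fun j _ => abs_nonneg _
    have hNcb : (0:ℝ) ≤ (N : ℝ) * cb := mul_nonneg (Nat.cast_nonneg N) hcb0
    obtain ⟨S, hS0, hS1⟩ := geom_right_inverse Q hRb cb hcb (b - u) (by linarith) hNcb hsmall
    have hbinv : (b • (1 : Matrix (Fin N) (Fin N) ℝ) - P) * Q = 1 :=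
      Matrix.mul_nonsing_inv _ (hdet b hb)
    have hfact : u • (1 : Matrix (Fin N) (Fin N) ℝ) - P
        = (b • (1 : Matrix (Fin N) (Fin N) ℝ) - P) * ((1 : Matrix (Fin N) (Fin N) ℝ) - (b - u) • Q) := by
      rw [Matrix.mul_sub, Matrix.mul_one, mul_smul_comm, hbinv]
      ext i' j'
      simp only [Matrix.sub_apply, Matrix.smul_apply, Matrix.one_apply, smul_eq_mul]
      by_cases hij : i' = j' <;> simp [hij] <;> ring
    have hri : (u • (1 : Matrix (Fin N) (Fin N) ℝ) - P) * (S * Q) = 1 := by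
      rw [hfact, Matrix.mul_assoc, ← Matrix.mul_assoc ((1 : Matrix (Fin N) (Fin N) ℝ) - (b - u) • Q),
        hS1, Matrix.one_mul, hbinv]
    rw [Matrix.inv_eq_right_inv hri, Matrix.mul_apply]
    exact Finset.sum_nonneg fun l _ => mul_nonneg (hS0 i l) (hRb l j)
  -- the resolvent is entrywise nonnegative at s
  have hRs : ∀ i j, 0 ≤ (s • (1 : Matrix (Fin N) (Fin N) ℝ) - P)⁻¹ i j := by
    set 𝒮 : Set ℝ := {t : ℝ | s ≤ t ∧ ∀ u : ℝ, t ≤ u →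
      ∀ i j, 0 ≤ (u • (1 : Matrix (Fin N) (Fin N) ℝ) - P)⁻¹ i j} with h𝒮_def
    have hT : s + (N : ℝ) * cP + 1 ∈ 𝒮 := by
      refine ⟨by linarith, fun u hu i j => key0 u hu i j⟩
    have hne : 𝒮.Nonempty := ⟨_, hT⟩
    have hbdd : BddBelow 𝒮 := ⟨s, fun t ht => ht.1⟩
    set b : ℝ := sInf 𝒮 with hb_def
    have hbs : s ≤ b := le_csInf hne fun t ht => ht.1
    have h1 : ∀ u : ℝ, b < u → ∀ i j, 0 ≤ (u • (1 : Matrix (Fin N) (Fin N) ℝ) - P)⁻¹ i j := by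
      intro u hu i j
      obtain ⟨t, ht, htu⟩ := exists_lt_of_csInf_lt hne hu
      exact ht.2 u htu.le i j
    have hcont : ∀ i j, ContinuousAt
        (fun u : ℝ => (u • (1 : Matrix (Fin N) (Fin N) ℝ) - P)⁻¹ i j) b := by
      intro i j
      have hMc : Continuous fun u : ℝ => u • (1 : Matrix (Fin N) (Fin N) ℝ) - P :=
        (continuous_id.smul continuous_const).sub continuous_const
      have hdc : Continuous fun u : ℝ => (u • (1 : Matrix (Fin N) (Fin N) ℝ) - P).det :=
        hMc.matrix_det
      have hac : Continuous fun u : ℝ =>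
          (u • (1 : Matrix (Fin N) (Fin N) ℝ) - P).adjugate i j :=
        (continuous_apply j).comp ((continuous_apply i).comp hMc.matrix_adjugate)
      have hdb : (b • (1 : Matrix (Fin N) (Fin N) ℝ) - P).det ≠ 0 := (hdet b hbs).ne_zero
      have : ContinuousAt (fun u : ℝ =>
          ((u • (1 : Matrix (Fin N) (Fin N) ℝ) - P).det)⁻¹ *
          (u • (1 : Matrix (Fin N) (Fin N) ℝ) - P).adjugate i j) b :=
        (hdc.continuousAt.inv₀ hdb).mul hac.continuousAt
      refine this.congr ?_
      filter_upwards with u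
      rw [Matrix.inv_def, Matrix.smul_apply, smul_eq_mul, Ring.inverse_eq_inv']
    have h2 : ∀ i j, 0 ≤ (b • (1 : Matrix (Fin N) (Fin N) ℝ) - P)⁻¹ i j := by
      intro i j
      have htend : Filter.Tendsto (fun u : ℝ => (u • (1 : Matrix (Fin N) (Fin N) ℝ) - P)⁻¹ i j)
          (nhdsWithin b (Set.Ioi b)) (nhds ((b • (1 : Matrix (Fin N) (Fin N) ℝ) - P)⁻¹ i j)) :=
        ((hcont i j).tendsto).mono_left nhdsWithin_le_nhds
      refine ge_of_tendsto htend ?_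
      filter_upwards [self_mem_nhdsWithin] with u hu
      exact h1 u hu i j
    have h3 : b ≤ s := by
      by_contra hbs'
      push_neg at hbs'
      set cb : ℝ := ∑ i, ∑ j, |(b • (1 : Matrix (Fin N) (Fin N) ℝ) - P)⁻¹ i j| with hcb_def
      have hcb0 : 0 ≤ cb :=
        Finset.sum_nonneg fun i _ => Finset.sum_nonneg fun j _ => abs_nonneg _
      have hNcb : (0:ℝ) ≤ (N : ℝ) * cb := mul_nonneg (Nat.cast_nonneg N) hcb0
      set ε : ℝ := min (b - s) (1 / (2 * ((N : ℝ) * cb + 1))) with hε_def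
      have hε0 : 0 < ε := lt_min (by linarith) (by positivity)
      have hmem : b - ε ∈ 𝒮 := by
        refine ⟨by have := min_le_left (b - s) (1 / (2 * ((N : ℝ) * cb + 1))); simp only [hε_def]; linarith, ?_⟩
        intro u hu i j
        rcases lt_or_ge b u with hbu | hub
        · exact h1 u hbu i j
        rcases eq_or_lt_of_le hub with rfl | hub'
        · exact h2 i j
        have hus : s ≤ u := by
          have := min_le_left (b - s) (1 / (2 * ((N : ℝ) * cb + 1)))
          simp only [hε_def] at hu ⊢
          linarith
        have hsmall : (b - u) * ((N : ℝ) * cb) < 1 := by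
          have h4 : b - u ≤ ε := by linarith
          have h5 : ε ≤ 1 / (2 * ((N : ℝ) * cb + 1)) := min_le_right _ _
          have h6 : (b - u) * ((N : ℝ) * cb) ≤ (1 / (2 * ((N : ℝ) * cb + 1))) * ((N : ℝ) * cb) :=
            mul_le_mul_of_nonneg_right (by linarith) hNcb
          have h7 : (1 / (2 * ((N : ℝ) * cb + 1))) * ((N : ℝ) * cb) < 1 := by
            rw [div_mul_eq_mul_div, one_mul, div_lt_one (by positivity)]
            linarith
          linarith
        exact keyStep b u hbs hus hub'.le h2 hsmall i j
      have := csInf_le hbdd hmem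
      simp only [← hb_def] at this
      linarith
    have hbe : b = s := le_antisymm h3 hbs
    intro i j
    rw [← hbe]
    exact h2 i j
  -- construct ξ
  have hsdet : IsUnit (s • (1 : Matrix (Fin N) (Fin N) ℝ) - P).det := hdet s le_rfl
  set ξ : Fin N → ℝ := (s • (1 : Matrix (Fin N) (Fin N) ℝ) - P)⁻¹.mulVec (fun _ => 1) with hξ_def
  have hM₀ : M₀ = s • (1 : Matrix (Fin N) (Fin N) ℝ) - P := by
    simp only [hP_def, sub_sub_cancel]
  have hMR : M₀ * (s • (1 : Matrix (Fin N) (Fin N) ℝ) - P)⁻¹ = 1 := by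
    rw [hM₀]; exact Matrix.mul_nonsing_inv _ hsdet
  have hMξ : M₀.mulVec ξ = fun _ => 1 := by
    rw [hξ_def, Matrix.mulVec_mulVec, hMR, Matrix.one_mulVec]
  have hξ0 : ∀ i, 0 ≤ ξ i := by
    intro i
    rw [hξ_def]
    unfold Matrix.mulVec dotProduct
    exact Finset.sum_nonneg fun l _ => by simpa using hRs i l
  have hPξ : ∀ i, 0 ≤ P.mulVec ξ i := by
    intro i
    unfold Matrix.mulVec dotProduct
    exact Finset.sum_nonneg fun l _ => mul_nonneg (hP i l) (hξ0 l)
  have hsξ : ∀ i, s * ξ i = P.mulVec ξ i + 1 := by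
    intro i
    have h1 : M₀.mulVec ξ i = 1 := by rw [hMξ]
    rw [hM₀, Matrix.sub_mulVec] at h1
    have h2 : (s • (1 : Matrix (Fin N) (Fin N) ℝ)).mulVec ξ i = s * ξ i := by
      rw [Matrix.smul_mulVec, Matrix.one_mulVec]
      simp
    simp only [Pi.sub_apply, h2] at h1
    linarith
  refine ⟨ξ, fun i => ?_, fun i => ?_⟩
  · refine lt_of_not_ge fun hle => ?_
    have h4 : s * ξ i ≤ 0 := mul_nonpos_iff.mpr (Or.inl ⟨hs0.le, hle⟩)
    have h5 := hsξ i
    have h6 := hPξ i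
    linarith
  · rw [hMξ]
    norm_num

lemma le_segNorm {N τ : ℕ} (u : ℤ → Fin N → ℝ) (m k : ℤ) (h1 : m - τ ≤ k) (h2 : k ≤ m) :
    ‖u k‖ ≤ segNorm τ u m :=
  Finset.le_sup' (fun k => ‖u k‖) (Finset.mem_Icc.mpr ⟨h1, h2⟩)

lemma segNorm_le {N τ : ℕ} (u : ℤ → Fin N → ℝ) (m : ℤ) (c : ℝ)
    (hc : ∀ k, m - τ ≤ k → k ≤ m → ‖u k‖ ≤ c) : segNorm τ u m ≤ c := by
  apply Finset.sup'_le
  intro k hk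
  rw [Finset.mem_Icc] at hk
  exact hc k hk.1 hk.2

lemma segNorm_nonneg {N τ : ℕ} (u : ℤ → Fin N → ℝ) (m : ℤ) : 0 ≤ segNorm τ u m :=
  le_trans (norm_nonneg (u m)) (le_segNorm u m m (by omega) le_rfl)

lemma theta_lower (α A h : ℝ) (hα : 0 < α) (hA : α ≤ A) (hh : 0 < h) :
    (1 - Real.exp (-A*h))/A ≤ (1 - Real.exp (-α*h))/α := by
  have hA0 : 0 < A := lt_of_lt_of_le hα hA
  have hc0 : 0 < α / A := by positivity
  have hc1 : α / A ≤ 1 := by rw [div_le_one hA0]; exact hA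
  have conv := convexOn_exp.2 (Set.mem_univ (-A*h)) (Set.mem_univ 0)
    hc0.le (by linarith : (0:ℝ) ≤ 1 - α/A) (by ring)
  simp only [smul_eq_mul, mul_zero, add_zero, Real.exp_zero, mul_one] at conv
  have hcA : α / A * (-A*h) = -α*h := by field_simp
  rw [hcA] at conv
  rw [div_le_div_iff₀ hA0 hα]
  have hmul := mul_le_mul_of_nonneg_right conv hA0.le
  have hid : (α/A * Real.exp (-A*h) + (1 - α/A)) * A = α * Real.exp (-A*h) + A - α := by
    field_simp
    ring
  rw [hid] at hmul
  linarith [hmul]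

/-- Global exponential stability of the discretized Hopfield model under the condition
that `M = diag(a_1^-,…,a_N^-) − [b_{ij}^+ F_j]` is an M-matrix. -/
theorem stmt4 {N τ : ℕ} (h : ℝ) (hh : 0 < h)
    (a : ℤ → Fin N → ℝ) (b : ℤ → Fin N → Fin N → ℝ) (I : ℤ → Fin N → ℝ)
    (τd : ℤ → ℕ) (hτd : ∀ m, τd m ≤ τ)
    (f : Fin N → ℝ → ℝ) (F : Fin N → ℝ) (hF : ∀ j, 0 < F j)
    (hfLip : ∀ j u v, |f j u - f j v| ≤ F j * |u - v|)
    (ha_pos : ∀ m i, 0 < a m i)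
    (haUB : ∃ A, ∀ m i, a m i ≤ A)
    (hI : ∃ J, ∀ m i, |I m i| ≤ J)
    (aminus : Fin N → ℝ) (bplus : Fin N → Fin N → ℝ)
    (ha_inf : ∀ i, IsGLB (Set.range fun m => a m i) (aminus i))
    (hb_sup : ∀ i j, IsLUB (Set.range fun m => |b m i j|) (bplus i j))
    (hM : IsMMatrix (Matrix.diagonal aminus - Matrix.of fun i j => bplus i j * F j)) :
    ∃ μ > (0 : ℝ), ∃ C > (1 : ℝ), ∀ n : ℤ, 0 ≤ n → ∀ x y : ℤ → Fin N → ℝ,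
      (∀ m, n ≤ m → ∀ i,
        x (m + 1) i = x m i * Real.exp (-(a m i) * h) +
          ((1 - Real.exp (-(a m i) * h)) / a m i) *
            ((∑ j, b m i j * f j (x (m - τd m) j)) + I m i)) →
      (∀ m, n ≤ m → ∀ i,
        y (m + 1) i = y m i * Real.exp (-(a m i) * h) +
          ((1 - Real.exp (-(a m i) * h)) / a m i) *
            ((∑ j, b m i j * f j (y (m - τd m) j)) + I m i)) →
      ∀ m, n ≤ m →
        segNorm τ (fun k i => x k i - y k i) m ≤
          C * Real.exp (-μ * ((m : ℝ) - n)) * segNorm τ (fun k i => x k i - y k i) n := by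
  classical
  rcases Nat.eq_zero_or_pos N with hN0 | hN
  · -- trivial case N = 0
    subst hN0
    refine ⟨1, one_pos, 2, one_lt_two, ?_⟩
    intro n hn x y hx hy m hm
    have hseg : ∀ m' : ℤ, segNorm τ (fun k i => x k i - y k i) m' = 0 := by
      intro m'
      have hz : ∀ k : ℤ, ‖(fun i => x k i - y k i : Fin 0 → ℝ)‖ = 0 := by
        intro k
        have : (fun i => x k i - y k i : Fin 0 → ℝ) = 0 := by
          funext i; exact i.elim0
        rw [this, norm_zero]
      apply le_antisymm
      · exact segNorm_le _ _ _ fun k _ _ => le_of_eq (hz k)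
      · exact segNorm_nonneg _ _
    rw [hseg, hseg]
    positivity
  -- main case
  have hi0 : (0 : ℕ) < N := hN
  set i0 : Fin N := ⟨0, hN⟩ with hi0_def
  obtain ⟨A, hA⟩ := haUB
  have hA0 : 0 < A := lt_of_lt_of_le (ha_pos 0 i0) (hA 0 i0)
  obtain ⟨ξ, hξpos, hMξpos⟩ := mmatrix_exists_pos_vec _ hM.1 hM.2
  have hbplus0 : ∀ i j, 0 ≤ bplus i j := fun i j =>
    le_trans (abs_nonneg (b 0 i j)) ((hb_sup i j).1 (Set.mem_range_self 0))
  have hble : ∀ m i j, |b m i j| ≤ bplus i j := fun m i j =>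
    (hb_sup i j).1 (Set.mem_range_self m)
  have haminus : ∀ m i, aminus i ≤ a m i := fun m i => (ha_inf i).1 (Set.mem_range_self m)
  set Bv : Fin N → ℝ := fun i => ∑ j, bplus i j * F j * ξ j with hBv_def
  have hBv0 : ∀ i, 0 ≤ Bv i := fun i => Finset.sum_nonneg fun j _ =>
    mul_nonneg (mul_nonneg (hbplus0 i j) (hF j).le) (hξpos j).le
  have hmulVec : ∀ i, (Matrix.diagonal aminus - Matrix.of fun i j => bplus i j * F j).mulVec ξ i
      = aminus i * ξ i - Bv i := by
    intro i
    rw [Matrix.sub_mulVec]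
    have e1 : (Matrix.of fun i j => bplus i j * F j).mulVec ξ i = Bv i := by
      simp [Matrix.mulVec, dotProduct, hBv_def, mul_assoc]
    simp [Matrix.mulVec_diagonal, e1]
  have hgap : ∀ i, 0 < aminus i * ξ i - Bv i := fun i => hmulVec i ▸ hMξpos i
  have hne : (Finset.univ : Finset (Fin N)).Nonempty := ⟨i0, Finset.mem_univ _⟩
  set δ : ℝ := Finset.univ.inf' hne (fun i => aminus i * ξ i - Bv i) with hδ_def
  have hδ0 : 0 < δ := by rw [hδ_def, Finset.lt_inf'_iff]; exact fun i _ => hgap i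
  have hδle : ∀ i, δ ≤ aminus i * ξ i - Bv i := fun i => Finset.inf'_le _ (Finset.mem_univ i)
  set Ξ : ℝ := Finset.univ.sup' hne ξ with hΞ_def
  have hΞle : ∀ i, ξ i ≤ Ξ := fun i => Finset.le_sup' ξ (Finset.mem_univ i)
  have hΞ0 : 0 < Ξ := lt_of_lt_of_le (hξpos i0) (hΞle i0)
  set ξm : ℝ := Finset.univ.inf' hne ξ with hξm_def
  have hξmle : ∀ i, ξm ≤ ξ i := fun i => Finset.inf'_le ξ (Finset.mem_univ i)
  have hξm0 : 0 < ξm := by rw [hξm_def, Finset.lt_inf'_iff]; exact fun i _ => hξpos i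
  set θmin : ℝ := (1 - Real.exp (-A*h))/A with hθmin_def
  have hEA1 : Real.exp (-A*h) < 1 := by
    have : Real.exp (-A*h) < Real.exp 0 := Real.exp_lt_exp.2 (by
      rw [neg_mul]
      exact neg_lt_zero.mpr (mul_pos hA0 hh))
    simpa using this
  have hθmin0 : 0 < θmin := div_pos (by linarith) hA0
  set ε : ℝ := θmin * δ / Ξ / 2 with hε_def
  have hε0 : 0 < ε := by positivity
  set lam : ℝ := (1+ε) ^ (-(1:ℝ)/(τ+1)) with hlam_def
  have hlam0 : 0 < lam := Real.rpow_pos_of_pos (by linarith) _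
  have hlam1 : lam < 1 := Real.rpow_lt_one_of_one_lt_of_neg (by linarith)
    (div_neg_of_neg_of_pos (by norm_num) (by positivity))
  have hpow : lam ^ (τ+1 : ℕ) = (1+ε)⁻¹ := by
    rw [hlam_def, ← Real.rpow_natCast ((1+ε) ^ (-(1:ℝ)/(τ+1))) (τ+1),
      ← Real.rpow_mul (by linarith)]
    rw [show (-(1:ℝ)/(τ+1)) * ((τ+1 : ℕ) : ℝ) = -1 by push_cast; field_simp]
    exact Real.rpow_neg_one _
  set L : ℝ := lam ^ (-(τ:ℤ)) with hL_def
  have hL1 : 1 ≤ L := one_le_zpow_of_nonpos₀ hlam0 hlam1.le (by omega)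
  have hL0 : 0 < L := lt_of_lt_of_le one_pos hL1
  have hLle : L ≤ 1 + ε := by
    have h1 : lam ^ (-((τ:ℤ)+1)) = 1+ε := by
      rw [show (-((τ:ℤ)+1)) = -((τ+1 : ℕ) : ℤ) by push_cast; ring,
        _root_.zpow_neg, zpow_natCast, hpow, inv_inv]
    calc L ≤ lam ^ (-((τ:ℤ)+1)) := zpow_le_zpow_right_of_le_one₀ hlam0 hlam1.le (by omega)
      _ = 1 + ε := h1
  have h1lam : 1 - lam ≤ ε := by
    have h2 : lam ^ (τ+1:ℕ) ≤ lam := pow_le_of_le_one hlam0.le hlam1.le (by omega)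
    rw [hpow] at h2
    have h3 : (0:ℝ) < 1 + ε := by linarith
    have h4 : (1+ε)⁻¹ * (1+ε) = 1 := inv_mul_cancel₀ h3.ne'
    have h5 := mul_le_mul_of_nonneg_right h2 h3.le
    have h6 : lam * ε ≤ 1 * ε := mul_le_mul_of_nonneg_right hlam1.le hε0.le
    linarith [h4, h5, h6]
  set μ : ℝ := -Real.log lam with hμ_def
  have hμ0 : 0 < μ := by rw [hμ_def]; linarith [Real.log_neg hlam0 hlam1]
  have hexp : ∀ k : ℤ, Real.exp (-μ * (k:ℝ)) = lam ^ k := fun k => by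
    rw [hμ_def, neg_neg, ← Real.rpow_def_of_pos hlam0, Real.rpow_intCast]
  set C : ℝ := Ξ / ξm * L + 1 with hC_def
  have hC1 : 1 < C := by
    have : 0 < Ξ / ξm * L := by positivity
    rw [hC_def]; linarith
  refine ⟨μ, hμ0, C, hC1, ?_⟩
  intro n hn x y hx hy
  set z : ℤ → Fin N → ℝ := fun k i => x k i - y k i with hz_def
  set K : ℝ := segNorm τ z n / ξm with hK_def
  have hsegn0 : 0 ≤ segNorm τ z n := segNorm_nonneg _ _
  have hK0 : 0 ≤ K := div_nonneg hsegn0 hξm0.le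
  have hKξm : K * ξm = segNorm τ z n := div_mul_cancel₀ _ hξm0.ne'
  -- main induction
  have main : ∀ m : ℤ, n ≤ m → ∀ k : ℤ, n - τ ≤ k → k ≤ m → ∀ i,
      |z k i| ≤ K * ξ i * lam ^ (k - n) := by
    intro m
    refine Int.le_induction (motive := fun m _ => ∀ k : ℤ, n - τ ≤ k → k ≤ m → ∀ i,
      |z k i| ≤ K * ξ i * lam ^ (k - n)) ?_ ?_ m
    · intro k hk1 hk2 i
      have h1 : |z k i| ≤ ‖z k‖ := by
        rw [← Real.norm_eq_abs]; exact norm_le_pi_norm (z k) i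
      have h2 : ‖z k‖ ≤ segNorm τ z n := le_segNorm z n k (by omega) hk2
      have h4 : K * ξm ≤ K * ξ i := mul_le_mul_of_nonneg_left (hξmle i) hK0
      have h5 : (1:ℝ) ≤ lam ^ (k - n) := one_le_zpow_of_nonpos₀ hlam0 hlam1.le (by omega)
      calc |z k i| ≤ K * ξ i := by linarith [hKξm]
        _ ≤ K * ξ i * lam ^ (k-n) :=
            le_mul_of_one_le_right (mul_nonneg hK0 (hξpos i).le) h5
    · intro m hm ih k hk1 hk2 i
      rcases lt_or_eq_of_le hk2 with hk3 | hk3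
      · exact ih k hk1 (by omega) i
      subst hk3
      have hα0 : 0 < a m i := ha_pos m i
      have hE0 : 0 < Real.exp (-(a m i)*h) := Real.exp_pos _
      have hE1 : Real.exp (-(a m i)*h) < 1 := by
        have : Real.exp (-(a m i)*h) < Real.exp 0 := Real.exp_lt_exp.2 (by
          rw [neg_mul]
          exact neg_lt_zero.mpr (mul_pos hα0 hh))
        simpa using this
      have hθ0 : 0 < (1 - Real.exp (-(a m i)*h))/(a m i) := div_pos (by linarith) hα0
      have hsum_eq : (∑ j, b m i j * f j (x (m - τd m) j))
          - (∑ j, b m i j * f j (y (m - τd m) j))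
          = ∑ j, b m i j * (f j (x (m - τd m) j) - f j (y (m - τd m) j)) := by
        rw [← Finset.sum_sub_distrib]
        exact Finset.sum_congr rfl fun j _ => (mul_sub _ _ _).symm
      have hzrec : z (m+1) i = z m i * Real.exp (-(a m i)*h)
          + ((1 - Real.exp (-(a m i)*h))/(a m i)) *
            ∑ j, b m i j * (f j (x (m - τd m) j) - f j (y (m - τd m) j)) := by
        simp only [hz_def]
        rw [hx m hm i, hy m hm i, ← hsum_eq]
        ring
      have habs : |z (m+1) i| ≤ |z m i| * Real.exp (-(a m i)*h)
          + ((1 - Real.exp (-(a m i)*h))/(a m i)) *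
            ∑ j, bplus i j * F j * |z (m - τd m) j| := by
        rw [hzrec]
        refine le_trans (abs_add_le _ _) ?_
        have t1 : |z m i * Real.exp (-(a m i)*h)| = |z m i| * Real.exp (-(a m i)*h) := by
          rw [abs_mul, abs_of_pos hE0]
        have t2 : |((1 - Real.exp (-(a m i)*h))/(a m i)) *
            ∑ j, b m i j * (f j (x (m - τd m) j) - f j (y (m - τd m) j))|
            ≤ ((1 - Real.exp (-(a m i)*h))/(a m i)) *
              ∑ j, bplus i j * F j * |z (m - τd m) j| := by
          rw [abs_mul, abs_of_pos hθ0]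
          apply mul_le_mul_of_nonneg_left _ hθ0.le
          refine le_trans (Finset.abs_sum_le_sum_abs _ _) ?_
          apply Finset.sum_le_sum
          intro j _
          rw [abs_mul]
          calc |b m i j| * |f j (x (m - τd m) j) - f j (y (m - τd m) j)|
              ≤ bplus i j * (F j * |x (m - τd m) j - y (m - τd m) j|) :=
                mul_le_mul (hble m i j) (hfLip j _ _) (abs_nonneg _) (hbplus0 i j)
            _ = bplus i j * F j * |z (m - τd m) j| := by
                simp only [hz_def]; ring
        linarith [t1, t2]
      have hIH1 : |z m i| ≤ K * ξ i * lam ^ (m - n) := ih m (by omega) le_rfl i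
      have hIH2 : ∀ j, |z (m - τd m) j| ≤ K * ξ j * (lam ^ (m-n) * L) := by
        intro j
        have h6 := ih (m - τd m) (by have := hτd m; omega) (by omega) j
        have h7 : lam ^ (m - τd m - n) ≤ lam ^ (m - n) * L := by
          rw [hL_def, ← zpow_add₀ hlam0.ne']
          apply zpow_le_zpow_right_of_le_one₀ hlam0 hlam1.le
          have := hτd m; omega
        calc |z (m - τd m) j| ≤ K * ξ j * lam ^ (m - τd m - n) := h6
          _ ≤ K * ξ j * (lam ^ (m-n) * L) :=
              mul_le_mul_of_nonneg_left h7 (mul_nonneg hK0 (hξpos j).le)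
      have hsumb : ∑ j, bplus i j * F j * |z (m - τd m) j|
          ≤ K * lam ^ (m-n) * L * Bv i := by
        calc ∑ j, bplus i j * F j * |z (m - τd m) j|
            ≤ ∑ j, bplus i j * F j * (K * ξ j * (lam ^ (m-n) * L)) := by
              apply Finset.sum_le_sum
              intro j _
              exact mul_le_mul_of_nonneg_left (hIH2 j)
                (mul_nonneg (hbplus0 i j) (hF j).le)
          _ = K * lam ^ (m-n) * L * Bv i := by
              simp only [hBv_def, Finset.mul_sum]
              exact Finset.sum_congr rfl fun j _ => by ring
      -- key scalar inequality
      have hθm : θmin ≤ (1 - Real.exp (-(a m i)*h))/(a m i) := by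
        rw [hθmin_def]
        exact theta_lower (a m i) A h hα0 (hA m i) hh
      have hαB : Bv i ≤ a m i * ξ i - δ := by
        have h8 : aminus i * ξ i ≤ a m i * ξ i :=
          mul_le_mul_of_nonneg_right (haminus m i) (hξpos i).le
        linarith [hδle i]
      have hθα : ((1 - Real.exp (-(a m i)*h))/(a m i)) * (a m i)
          = 1 - Real.exp (-(a m i)*h) := div_mul_cancel₀ _ hα0.ne'
      have key : Real.exp (-(a m i)*h) * ξ i
          + ((1 - Real.exp (-(a m i)*h))/(a m i)) * L * Bv i ≤ lam * ξ i := by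
        set E : ℝ := Real.exp (-(a m i)*h)
        set θ : ℝ := (1 - E)/(a m i)
        have c1 : θ * L * Bv i ≤ θ * L * (a m i * ξ i - δ) :=
          mul_le_mul_of_nonneg_left hαB (by positivity)
        have c2 : θ * L * (a m i * ξ i - δ) = (1-E) * L * ξ i - θ * L * δ := by
          have e : θ * L * (a m i * ξ i - δ) = (θ * (a m i)) * L * ξ i - θ * L * δ := by ring
          rw [e, hθα]
        have c3 : (1-E) * L * ξ i ≤ ξ i - E * ξ i + (L-1) * Ξ := by
          have e0 : 0 ≤ (L-1)*ξ i := mul_nonneg (by linarith) (hξpos i).le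
          have e1 : (1-E)*((L-1)*ξ i) ≤ 1*((L-1)*ξ i) :=
            mul_le_mul_of_nonneg_right (by linarith) e0
          have e2 : (L-1)*ξ i ≤ (L-1)*Ξ := mul_le_mul_of_nonneg_left (hΞle i) (by linarith)
          linarith [e1, e2]
        have c4 : (L-1) * Ξ ≤ ε * Ξ := mul_le_mul_of_nonneg_right (by linarith) hΞ0.le
        have c5 : θmin * δ ≤ θ * L * δ := by
          have e3 : θmin * δ ≤ θ * δ := mul_le_mul_of_nonneg_right hθm hδ0.le
          have e4 : θ * δ ≤ θ * L * δ := by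
            have g0 : θ * 1 ≤ θ * L := mul_le_mul_of_nonneg_left hL1 hθ0.le
            have g1 := mul_le_mul_of_nonneg_right g0 hδ0.le
            linarith [g1]
          linarith
        have c6 : θmin * δ = 2 * (ε * Ξ) := by
          rw [hε_def]
          field_simp
        have c7 : ξ i - lam * ξ i ≤ ε * Ξ := by
          have d1 : (1 - lam) * ξ i ≤ ε * ξ i := mul_le_mul_of_nonneg_right h1lam (hξpos i).le
          have d2 : ε * ξ i ≤ ε * Ξ := mul_le_mul_of_nonneg_left (hΞle i) hε0.le
          linarith [d1, d2]
        calc E * ξ i + θ * L * Bv i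
            ≤ E * ξ i + ((1-E) * L * ξ i - θ * L * δ) := by linarith [c1, c2]
          _ ≤ E * ξ i + ((ξ i - E * ξ i + (L-1)*Ξ) - θ * L * δ) := by linarith [c3]
          _ ≤ E * ξ i + ((ξ i - E * ξ i + ε*Ξ) - 2*(ε*Ξ)) := by linarith [c4, c5, c6]
          _ = ξ i - ε*Ξ := by ring
          _ ≤ lam * ξ i := by linarith [c7]
      have hlz0 : (0:ℝ) ≤ K * lam ^ (m-n) :=
        mul_nonneg hK0 (zpow_pos hlam0 _).le
      calc |z (m+1) i|
          ≤ |z m i| * Real.exp (-(a m i)*h)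
            + ((1 - Real.exp (-(a m i)*h))/(a m i)) *
              ∑ j, bplus i j * F j * |z (m - τd m) j| := habs
        _ ≤ (K * ξ i * lam ^ (m-n)) * Real.exp (-(a m i)*h)
            + ((1 - Real.exp (-(a m i)*h))/(a m i)) * (K * lam ^ (m-n) * L * Bv i) := by
            apply add_le_add
            · exact mul_le_mul_of_nonneg_right hIH1 hE0.le
            · exact mul_le_mul_of_nonneg_left hsumb hθ0.le
        _ = (K * lam ^ (m-n)) * (Real.exp (-(a m i)*h) * ξ i
            + ((1 - Real.exp (-(a m i)*h))/(a m i)) * L * Bv i) := by ring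
        _ ≤ (K * lam ^ (m-n)) * (lam * ξ i) := mul_le_mul_of_nonneg_left key hlz0
        _ = K * ξ i * lam ^ (m+1-n) := by
            rw [show m+1-n = (m-n)+1 by ring, zpow_add₀ hlam0.ne', zpow_one]
            ring
  -- conclusion
  intro m hm
  apply segNorm_le
  intro k hk1 hk2
  have h1 : ‖z k‖ ≤ K * Ξ * lam ^ (k-n) := by
    apply (pi_norm_le_iff_of_nonneg (by positivity)).2
    intro i
    rw [Real.norm_eq_abs]
    calc |z k i| ≤ K * ξ i * lam ^ (k-n) := main m hm k (by omega) hk2 i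
      _ ≤ K * Ξ * lam ^ (k-n) :=
          mul_le_mul_of_nonneg_right (mul_le_mul_of_nonneg_left (hΞle i) hK0)
            (zpow_pos hlam0 _).le
  have h2 : lam ^ (k-n) ≤ lam ^ (m-n) * L := by
    rw [hL_def, ← zpow_add₀ hlam0.ne']
    exact zpow_le_zpow_right_of_le_one₀ hlam0 hlam1.le (by omega)
  calc ‖z k‖ ≤ K * Ξ * lam ^ (k-n) := h1
    _ ≤ K * Ξ * (lam ^ (m-n) * L) :=
        mul_le_mul_of_nonneg_left h2 (mul_nonneg hK0 hΞ0.le)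
    _ = (Ξ / ξm * L) * lam ^ (m-n) * segNorm τ z n := by
        rw [hK_def]; field_simp
    _ ≤ C * lam ^ (m-n) * segNorm τ z n := by
        apply mul_le_mul_of_nonneg_right _ hsegn0
        apply mul_le_mul_of_nonneg_right _ (zpow_pos hlam0 _).le
        rw [hC_def]; linarith
    _ = C * Real.exp (-μ * ((m:ℝ) - (n:ℝ))) * segNorm τ z n := by
        rw [show ((m:ℝ) - (n:ℝ)) = ((m - n : ℤ) : ℝ) by push_cast; ring, hexp (m-n)]
end

section
/- In the setting of the abstract stability theorem for x̄(m+1) = L̄_m x̄_m + f̄_m(x̄_m) with f̄_m(0) = 0, bounds ‖A^(i)_{m,n}‖ ≤ a^(i)_{m,n} ≤ a'_{m,n} and λ < 1: the operator J on the weighted space C_{n,ᾱ}, defined by (Jx̄)_n = ᾱ and (Jx̄)_m = (ξ^(1)_m,…,ξ^(N)_m) with ξ^(i)_m = A^(i)_{m,n} α_i + Σ_{k=n}^{m-1} A^(i)_{m,k+1} Γ f^(i)_k(x̄_k) for m > n, maps C_{n,ᾱ} into itself, satisfies |Jx̄|_C ≤ 1 + λ|x̄|_C, and is a λ-Lipschitz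 contraction: |Jx̄ − Jȳ|_C ≤ λ|x̄ − ȳ|_C. Consequently J has a unique fixed point x̄* with |x̄*|_C ≤ 1/(1−λ). -/
/-- `Γ : Y → X` sends `u` to the segment which is `u` at delay offset `0` and `0` at
negative offsets. -/
def Gam {Y : Type*} [Zero Y] (ρ : ℕ) (u : Y) : Fin (ρ + 1) → Y :=
  fun j => if (j : ℕ) = ρ then u else 0

/-- The set of weighted segment quotients `‖x̄_m − ȳ_m‖/(a'_{m,n}‖ᾱ‖)`, `m ≥ n`. -/
noncomputable def wSet {Y : Type*} [NormedAddCommGroup Y] {N ρ : ℕ}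
    (a' : ℤ → ℤ → ℝ) (n : ℤ) (α : Fin N → Fin (ρ + 1) → Y)
    (x y : ℤ → Fin N → Y) : Set ℝ :=
  {s | ∃ m : ℤ, n ≤ m ∧
    s = ‖(fun i => seg ρ (fun k => x k i - y k i) m : Fin N → Fin (ρ + 1) → Y)‖ /
          (a' m n * ‖α‖)}

/-- The weighted distance `sup_{m ≥ n} ‖x̄_m − ȳ_m‖/(a'_{m,n}‖ᾱ‖)`. -/
noncomputable def wD {Y : Type*} [NormedAddCommGroup Y] {N ρ : ℕ}
    (a' : ℤ → ℤ → ℝ) (n : ℤ) (α : Fin N → Fin (ρ + 1) → Y)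
    (x y : ℤ → Fin N → Y) : ℝ :=
  sSup (wSet a' n α x y)

/-- Membership in the weighted space `C_{n,ᾱ}`: the segment at `n` equals `ᾱ` and the
weighted norm `|x̄|_C = sup_{m≥n} ‖x̄_m‖/(a'_{m,n}‖ᾱ‖)` is finite. -/
def memC {Y : Type*} [NormedAddCommGroup Y] {N ρ : ℕ}
    (a' : ℤ → ℤ → ℝ) (n : ℤ) (α : Fin N → Fin (ρ + 1) → Y)
    (x : ℤ → Fin N → Y) : Prop :=
  (∀ i : Fin N, ∀ j : Fin (ρ + 1), x (n - ρ + j) i = α i j) ∧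
    BddAbove (wSet a' n α x 0)

section aux
variable {Y : Type*} [NormedAddCommGroup Y] {N ρ : ℕ}

/-- Difference of segments, as element of the big space. -/
def Dseg (ρ : ℕ) (x y : ℤ → Fin N → Y) (m : ℤ) : Fin N → Fin (ρ + 1) → Y :=
  fun i => seg ρ (fun k => x k i - y k i) m

variable {a' : ℤ → ℤ → ℝ} {n m : ℤ} {α : Fin N → Fin (ρ + 1) → Y} {x y : ℤ → Fin N → Y}

lemma mem_wSet (hm : n ≤ m) :
    ‖Dseg ρ x y m‖ / (a' m n * ‖α‖) ∈ wSet a' n α x y := ⟨m, hm, rfl⟩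

lemma Dseg_le_wD (h : BddAbove (wSet a' n α x y)) (hm : n ≤ m)
    (hpos : 0 < a' m n * ‖α‖) :
    ‖Dseg ρ x y m‖ ≤ wD a' n α x y * (a' m n * ‖α‖) :=
  (div_le_iff₀ hpos).mp (le_csSup h (mem_wSet hm))

lemma wD_le {c : ℝ} (hc : 0 ≤ c)
    (hpos : ∀ m, n ≤ m → 0 < a' m n * ‖α‖)
    (h : ∀ m, n ≤ m → ‖Dseg ρ x y m‖ ≤ c * (a' m n * ‖α‖)) :
    wD a' n α x y ≤ c := by
  refine Real.sSup_le ?_ hc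
  rintro s ⟨m, hm, rfl⟩
  exact (div_le_iff₀ (hpos m hm)).mpr (h m hm)

lemma bdd_of {c : ℝ}
    (hpos : ∀ m, n ≤ m → 0 < a' m n * ‖α‖)
    (h : ∀ m, n ≤ m → ‖Dseg ρ x y m‖ ≤ c * (a' m n * ‖α‖)) :
    BddAbove (wSet a' n α x y) := by
  refine ⟨c, ?_⟩
  rintro s ⟨m, hm, rfl⟩
  exact (div_le_iff₀ (hpos m hm)).mpr (h m hm)

lemma wD_nonneg (h : BddAbove (wSet a' n α x y)) (hpos : 0 < a' n n * ‖α‖) :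
    0 ≤ wD a' n α x y :=
  le_trans (div_nonneg (norm_nonneg _) hpos.le) (le_csSup h (mem_wSet le_rfl))

lemma Dseg_zero : Dseg ρ x 0 m = fun i => seg ρ (fun k => x k i) m := by
  funext i j; simp [Dseg, seg]

lemma norm_Gam_le (u : Y) : ‖Gam ρ u‖ ≤ ‖u‖ := by
  refine (pi_norm_le_iff_of_nonneg (norm_nonneg u)).mpr fun j => ?_
  unfold Gam; split <;> simp

lemma Gam_sub (u v : Y) : Gam ρ u - Gam ρ v = Gam ρ (u - v) := by
  funext j; by_cases h : (j:ℕ) = ρ <;> simp [Gam, h]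

lemma seg_sub (u v : ℤ → Y) (m : ℤ) :
    seg ρ (fun k => u k - v k) m = seg ρ u m - seg ρ v m := rfl

/-- Extract a window position. -/
lemma window (ρ : ℕ) (n k : ℤ) (hk : n - (ρ:ℤ) ≤ k) :
    ∃ m : ℤ, n ≤ m ∧ ∃ j : Fin (ρ + 1), m - (ρ:ℤ) + ((j:ℕ):ℤ) = k := by
  have h2 : max k n - (ρ:ℤ) ≤ k := by
    rcases le_total k n with h | h
    · rw [max_eq_right h]; omega
    · rw [max_eq_left h]; omega
  have h1 : k ≤ max k n := le_max_left _ _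
  refine ⟨max k n, le_max_right _ _, ⟨(k - (max k n - ρ)).toNat, by omega⟩, by simp; omega⟩

end aux
/-- In the setting of the abstract stability theorem (bounds
`‖A^(i)_{m,n}‖ ≤ a^(i)_{m,n} ≤ a'_{m,n}`, `f̄_m(0) = 0`, `λ < 1`), the operator `J`
defined by `(Jx̄)_n = ᾱ` and
`(Jx̄)_m^{(i)} = A^(i)_{m,n} α_i + Σ_{k=n}^{m-1} A^(i)_{m,k+1} Γ f^(i)_k(x̄_k)` for
`m > n` maps `C_{n,ᾱ}` into itself with `|Jx̄|_C ≤ 1 + λ|x̄|_C`, is a `λ`-contraction,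
and hence has a unique fixed point `x̄*` with `|x̄*|_C ≤ 1/(1−λ)`. -/
theorem stmt10 {Y : Type*} [NormedAddCommGroup Y] [NormedSpace ℝ Y] [CompleteSpace Y]
    {N ρ : ℕ}
    (L : ℤ → Fin N → ((Fin (ρ + 1) → Y) →L[ℝ] Y))
    (f : ℤ → (Fin N → Fin (ρ + 1) → Y) → (Fin N → Y))
    (Lf : ℤ → Fin N → ℝ)
    (hf0 : ∀ m i, f m 0 i = 0)
    (hfLip : ∀ m i u v, ‖f m u i - f m v i‖ ≤ Lf m i * ‖u - v‖)
    (A : ℤ → ℤ → Fin N → ((Fin (ρ + 1) → Y) →L[ℝ] (Fin (ρ + 1) → Y)))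
    (hA : ∀ i : Fin N, ∀ n : ℤ, ∀ α : Fin (ρ + 1) → Y, ∃ v : ℤ → Y,
      (∀ j : Fin (ρ + 1), v (n - ρ + j) = α j) ∧
      (∀ m, n ≤ m → v (m + 1) = L m i (seg ρ v m)) ∧
      (∀ m, n ≤ m → A m n i α = seg ρ v m))
    (aa : ℤ → ℤ → Fin N → ℝ) (a' : ℤ → ℤ → ℝ)
    (haA : ∀ m n : ℤ, ∀ i, n ≤ m → ‖A m n i‖ ≤ aa m n i)
    (haa' : ∀ m n : ℤ, ∀ i, n ≤ m → aa m n i ≤ a' m n)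
    (ha'pos : ∀ m n : ℤ, n ≤ m → 0 < a' m n)
    (lam : ℝ) (hlam0 : 0 ≤ lam) (hlam1 : lam < 1)
    (hlam : ∀ i : Fin N, ∀ m n : ℤ, n ≤ m →
      (1 / a' m n) * ∑ k ∈ Finset.Ico n m, aa m (k + 1) i * Lf k i * a' k n ≤ lam)
    (n : ℤ) (α : Fin N → Fin (ρ + 1) → Y) (hα : α ≠ 0)
    (J : (ℤ → Fin N → Y) → (ℤ → Fin N → Y))
    (hJn : ∀ x : ℤ → Fin N → Y, ∀ i : Fin N, ∀ j : Fin (ρ + 1),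
      J x (n - ρ + j) i = α i j)
    (hJm : ∀ x : ℤ → Fin N → Y, ∀ m : ℤ, n < m → ∀ i,
      seg ρ (fun k => J x k i) m =
        A m n i (α i) +
          ∑ k ∈ Finset.Ico n m,
            A m (k + 1) i (Gam ρ (f k (fun i' => seg ρ (fun k' => x k' i') k) i))) :
    -- J maps C_{n,ᾱ} into itself and |Jx̄|_C ≤ 1 + λ|x̄|_C
    (∀ x, memC a' n α x →
      memC a' n α (J x) ∧ wD a' n α (J x) 0 ≤ 1 + lam * wD a' n α x 0) ∧
    -- J is a λ-contraction: |Jx̄ − Jȳ|_C ≤ λ|x̄ − ȳ|_C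
    (∀ x y, memC a' n α x → memC a' n α y →
      wD a' n α (J x) (J y) ≤ lam * wD a' n α x y) ∧
    -- J has a unique fixed point x̄* in C_{n,ᾱ}, and |x̄*|_C ≤ 1/(1−λ)
    (∃ xs, memC a' n α xs ∧ (∀ k : ℤ, n - ρ ≤ k → ∀ i, J xs k i = xs k i) ∧
      wD a' n α xs 0 ≤ 1 / (1 - lam) ∧
      ∀ z, memC a' n α z → (∀ k : ℤ, n - ρ ≤ k → ∀ i, J z k i = z k i) →
        ∀ k : ℤ, n - ρ ≤ k → ∀ i, z k i = xs k i) := by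
  classical
  obtain ⟨i0, j0, hij0⟩ : ∃ i j, α i j ≠ 0 := by
    by_contra h
    push_neg at h
    exact hα (funext fun i => funext fun j => h i j)
  haveI hYnt : Nontrivial Y := ⟨α i0 j0, 0, hij0⟩
  have hαpos : (0:ℝ) < ‖α‖ := norm_pos_iff.mpr hα
  have hposm : ∀ m : ℤ, n ≤ m → 0 < a' m n * ‖α‖ := fun m hm =>
    mul_pos (ha'pos m n hm) hαpos
  have hLf0 : ∀ k i, 0 ≤ Lf k i := by
    intro k i
    have h := hfLip k i (fun _ _ => α i0 j0) 0
    have hn : (0:ℝ) < ‖(fun _ _ => α i0 j0 : Fin N → Fin (ρ+1) → Y) - 0‖ := by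
      rw [sub_zero]
      refine norm_pos_iff.mpr fun h0 => hij0 ?_
      exact congrFun (congrFun h0 i0) j0
    nlinarith [norm_nonneg (f k (fun _ _ => α i0 j0) i - f k 0 i)]
  have haa0 : ∀ (m k : ℤ) i, k ≤ m → 0 ≤ aa m k i := fun m k i h =>
    le_trans (norm_nonneg _) (haA m k i h)
  have hann : 1 ≤ a' n n := by
    have hid : A n n i0 = ContinuousLinearMap.id ℝ _ := by
      refine ContinuousLinearMap.ext fun β => ?_
      obtain ⟨v, hv1, _, hv3⟩ := hA i0 n β
      rw [hv3 n le_rfl]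
      funext j
      exact hv1 j
    have h1 : ‖A n n i0‖ = 1 := by rw [hid]; exact ContinuousLinearMap.norm_id
    have := haA n n i0 le_rfl
    have := haa' n n i0 le_rfl
    linarith
  have hsum : ∀ (i : Fin N) (m : ℤ), n ≤ m →
      ∑ k ∈ Finset.Ico n m, aa m (k+1) i * Lf k i * a' k n ≤ lam * a' m n := by
    intro i m hm
    have h := hlam i m n hm
    rw [one_div, inv_mul_le_iff₀ (ha'pos m n hm)] at h
    linarith [h]
  -- the core sum estimate
  have hest : ∀ (x y : ℤ → Fin N → Y) (c : ℝ), 0 ≤ c →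
      (∀ k, n ≤ k → ‖Dseg ρ x y k‖ ≤ c * (a' k n * ‖α‖)) →
      ∀ (i : Fin N) (m : ℤ), n < m →
      ‖∑ k ∈ Finset.Ico n m, A m (k+1) i
          (Gam ρ (f k (fun i' => seg ρ (fun k' => x k' i') k) i
            - f k (fun i' => seg ρ (fun k' => y k' i') k) i))‖
        ≤ lam * a' m n * (c * ‖α‖) := by
    intro x y c hc hD i m hm
    calc ‖∑ k ∈ Finset.Ico n m, A m (k+1) i
          (Gam ρ (f k (fun i' => seg ρ (fun k' => x k' i') k) i
            - f k (fun i' => seg ρ (fun k' => y k' i') k) i))‖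
        ≤ ∑ k ∈ Finset.Ico n m, ‖A m (k+1) i
          (Gam ρ (f k (fun i' => seg ρ (fun k' => x k' i') k) i
            - f k (fun i' => seg ρ (fun k' => y k' i') k) i))‖ := norm_sum_le _ _
      _ ≤ ∑ k ∈ Finset.Ico n m, aa m (k+1) i * Lf k i * a' k n * (c * ‖α‖) := by
          refine Finset.sum_le_sum fun k hk => ?_
          obtain ⟨hk1, hk2⟩ := Finset.mem_Ico.mp hk
          have hkm : k + 1 ≤ m := hk2
          have haa0' := haa0 m (k+1) i hkm
          have t1 : ‖A m (k+1) i (Gam ρ (f k (fun i' => seg ρ (fun k' => x k' i') k) i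
              - f k (fun i' => seg ρ (fun k' => y k' i') k) i))‖
              ≤ aa m (k+1) i * ‖Gam ρ (f k (fun i' => seg ρ (fun k' => x k' i') k) i
              - f k (fun i' => seg ρ (fun k' => y k' i') k) i)‖ :=
            le_trans (ContinuousLinearMap.le_opNorm _ _)
              (mul_le_mul_of_nonneg_right (haA m (k+1) i hkm) (norm_nonneg _))
          have t2 : ‖Gam ρ (f k (fun i' => seg ρ (fun k' => x k' i') k) i
              - f k (fun i' => seg ρ (fun k' => y k' i') k) i)‖
              ≤ Lf k i * ‖Dseg ρ x y k‖ := by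
            refine le_trans (norm_Gam_le _) ?_
            have heq : (fun i' => seg ρ (fun k' => x k' i') k)
                - (fun i' => seg ρ (fun k' => y k' i') k) = Dseg ρ x y k := rfl
            calc ‖f k (fun i' => seg ρ (fun k' => x k' i') k) i
                - f k (fun i' => seg ρ (fun k' => y k' i') k) i‖
                ≤ Lf k i * ‖(fun i' => seg ρ (fun k' => x k' i') k)
                  - (fun i' => seg ρ (fun k' => y k' i') k)‖ := hfLip _ _ _ _
              _ = Lf k i * ‖Dseg ρ x y k‖ := by rw [heq]
          have t3 : ‖Dseg ρ x y k‖ ≤ c * (a' k n * ‖α‖) := hD k hk1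
          have t4 : Lf k i * ‖Dseg ρ x y k‖ ≤ Lf k i * (c * (a' k n * ‖α‖)) :=
            mul_le_mul_of_nonneg_left t3 (hLf0 k i)
          calc ‖A m (k+1) i (Gam ρ (f k (fun i' => seg ρ (fun k' => x k' i') k) i
              - f k (fun i' => seg ρ (fun k' => y k' i') k) i))‖
              ≤ aa m (k+1) i * (Lf k i * (c * (a' k n * ‖α‖))) :=
                le_trans t1 (mul_le_mul_of_nonneg_left (le_trans t2 t4) haa0')
            _ = aa m (k+1) i * Lf k i * a' k n * (c * ‖α‖) := by ring
      _ = (∑ k ∈ Finset.Ico n m, aa m (k+1) i * Lf k i * a' k n) * (c * ‖α‖) := by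
          rw [Finset.sum_mul]
      _ ≤ lam * a' m n * (c * ‖α‖) := by
          refine mul_le_mul_of_nonneg_right (hsum i m hm.le) ?_
          positivity
  -- part 1
  have part1 : ∀ x, memC a' n α x →
      memC a' n α (J x) ∧ wD a' n α (J x) 0 ≤ 1 + lam * wD a' n α x 0 := by
    intro x hx
    obtain ⟨hxw, hxb⟩ := hx
    have hx0 : 0 ≤ wD a' n α x 0 := wD_nonneg hxb (hposm n le_rfl)
    have hc : (0:ℝ) ≤ 1 + lam * wD a' n α x 0 := by nlinarith [mul_nonneg hlam0 hx0]
    have hb : ∀ m, n ≤ m →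
        ‖Dseg ρ (J x) 0 m‖ ≤ (1 + lam * wD a' n α x 0) * (a' m n * ‖α‖) := by
      intro m hm
      rcases hm.eq_or_lt with heq | hm'
      · subst heq
        have hDα : Dseg ρ (J x) 0 n = α := by
          funext i j
          show J x (n - ρ + j) i - 0 = α i j
          rw [sub_zero]; exact hJn x i j
        rw [hDα]
        nlinarith [mul_nonneg (mul_nonneg hlam0 hx0) (mul_pos (ha'pos n n le_rfl) hαpos).le,
          mul_le_mul_of_nonneg_right hann hαpos.le]
      · rw [Dseg_zero]
        refine (pi_norm_le_iff_of_nonneg (mul_nonneg hc (hposm m hm).le)).mpr fun i => ?_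
        rw [hJm x m hm' i]
        have hrw : ∀ k : ℤ, Gam ρ (f k (fun i' => seg ρ (fun k' => x k' i') k) i)
            = Gam ρ (f k (fun i' => seg ρ (fun k' => x k' i') k) i
              - f k (fun i' => seg ρ (fun k' => (0 : ℤ → Fin N → Y) k' i') k) i) := by
          intro k
          have h0 : (fun i' => seg ρ (fun k' => (0 : ℤ → Fin N → Y) k' i') k)
              = (0 : Fin N → Fin (ρ+1) → Y) := rfl
          rw [h0, hf0, sub_zero]
        simp only [hrw]
        have hA1 : ‖A m n i (α i)‖ ≤ a' m n * ‖α‖ := by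
          refine le_trans (ContinuousLinearMap.le_opNorm _ _) ?_
          have h1 : ‖A m n i‖ ≤ a' m n := le_trans (haA m n i hm) (haa' m n i hm)
          exact mul_le_mul h1 (norm_le_pi_norm α i) (norm_nonneg _) (ha'pos m n hm).le
        have hA2 := hest x 0 (wD a' n α x 0) hx0
          (fun k hk => Dseg_le_wD hxb hk (hposm k hk)) i m hm'
        refine le_trans (norm_add_le _ _) (le_trans (add_le_add hA1 hA2) (le_of_eq (by ring)))
    exact ⟨⟨hJn x, bdd_of hposm hb⟩, wD_le hc hposm hb⟩
  -- boundedness of the pair set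
  have hbdd2 : ∀ x y, memC a' n α x → memC a' n α y →
      BddAbove (wSet a' n α x y) ∧
      (∀ m, n ≤ m → ‖Dseg ρ x y m‖ ≤
        (wD a' n α x 0 + wD a' n α y 0) * (a' m n * ‖α‖)) := by
    intro x y hx hy
    have hb : ∀ m, n ≤ m → ‖Dseg ρ x y m‖ ≤
        (wD a' n α x 0 + wD a' n α y 0) * (a' m n * ‖α‖) := by
      intro m hm
      have hsplit : Dseg ρ x y m = Dseg ρ x 0 m - Dseg ρ y 0 m := by
        funext i j
        show x (m - ρ + j) i - y (m - ρ + j) i = _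
        simp [Dseg, seg]
      rw [hsplit]
      refine le_trans (norm_sub_le _ _) ?_
      have h1 := Dseg_le_wD hx.2 hm (hposm m hm)
      have h2 := Dseg_le_wD hy.2 hm (hposm m hm)
      calc ‖Dseg ρ x 0 m‖ + ‖Dseg ρ y 0 m‖
          ≤ wD a' n α x 0 * (a' m n * ‖α‖) + wD a' n α y 0 * (a' m n * ‖α‖) :=
            add_le_add h1 h2
        _ = (wD a' n α x 0 + wD a' n α y 0) * (a' m n * ‖α‖) := by ring
    exact ⟨bdd_of hposm hb, hb⟩
  -- part 2
  have part2 : ∀ x y, memC a' n α x → memC a' n α y →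
      wD a' n α (J x) (J y) ≤ lam * wD a' n α x y := by
    intro x y hx hy
    have hxyb : BddAbove (wSet a' n α x y) := (hbdd2 x y hx hy).1
    have hxy0 : 0 ≤ wD a' n α x y := wD_nonneg hxyb (hposm n le_rfl)
    have hb : ∀ m, n ≤ m → ‖Dseg ρ (J x) (J y) m‖ ≤
        (lam * wD a' n α x y) * (a' m n * ‖α‖) := by
      intro m hm
      rcases hm.eq_or_lt with heq | hm'
      · subst heq
        have hD0 : Dseg ρ (J x) (J y) n = 0 := by
          funext i j
          show J x (n - ρ + j) i - J y (n - ρ + j) i = 0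
          rw [hJn x i j, hJn y i j, sub_self]
        rw [hD0, norm_zero]
        exact mul_nonneg (mul_nonneg hlam0 hxy0) (hposm n le_rfl).le
      · refine (pi_norm_le_iff_of_nonneg
          (mul_nonneg (mul_nonneg hlam0 hxy0) (hposm m hm).le)).mpr fun i => ?_
        have hDi : Dseg ρ (J x) (J y) m i
            = seg ρ (fun k => J x k i) m - seg ρ (fun k => J y k i) m := rfl
        rw [hDi, hJm x m hm' i, hJm y m hm' i]
        have hcollect :
            (A m n i) (α i) + ∑ k ∈ Finset.Ico n m,
                (A m (k + 1) i) (Gam ρ (f k (fun i' => seg ρ (fun k' => x k' i') k) i))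
              - ((A m n i) (α i) + ∑ k ∈ Finset.Ico n m,
                (A m (k + 1) i) (Gam ρ (f k (fun i' => seg ρ (fun k' => y k' i') k) i)))
            = ∑ k ∈ Finset.Ico n m, (A m (k + 1) i)
                (Gam ρ (f k (fun i' => seg ρ (fun k' => x k' i') k) i
                  - f k (fun i' => seg ρ (fun k' => y k' i') k) i)) := by
          rw [add_sub_add_left_eq_sub, ← Finset.sum_sub_distrib]
          refine Finset.sum_congr rfl fun k _ => ?_
          rw [← map_sub, Gam_sub]
        rw [hcollect]
        have := hest x y (wD a' n α x y) hxy0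
          (fun k hk => Dseg_le_wD hxyb hk (hposm k hk)) i m hm'
        refine le_trans this (le_of_eq (by ring))
    exact wD_le (mul_nonneg hlam0 hxy0) hposm hb
  -- initial point x0 from the linear solutions
  choose v hv1 hv2 hv3 using hA
  set x0 : ℤ → Fin N → Y := fun k i => v i n (α i) k with hx0def
  have hx0w : ∀ (i : Fin N) (j : Fin (ρ+1)), x0 (n - ρ + j) i = α i j :=
    fun i j => hv1 i n (α i) j
  have hx0b : ∀ m, n ≤ m → ‖Dseg ρ x0 0 m‖ ≤ 1 * (a' m n * ‖α‖) := by
    intro m hm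
    rw [Dseg_zero, one_mul]
    refine (pi_norm_le_iff_of_nonneg (hposm m hm).le).mpr fun i => ?_
    have hseg : seg ρ (fun k => x0 k i) m = A m n i (α i) := (hv3 i n (α i) m hm).symm
    rw [hseg]
    refine le_trans (ContinuousLinearMap.le_opNorm _ _) ?_
    exact mul_le_mul (le_trans (haA m n i hm) (haa' m n i hm)) (norm_le_pi_norm α i)
      (norm_nonneg _) (ha'pos m n hm).le
  have hx0b' : ∀ m, n ≤ m → ‖Dseg ρ x0 0 m‖ ≤ 1 * (a' m n * ‖α‖) := hx0b
  have hx0mem : memC a' n α x0 := ⟨hx0w, bdd_of hposm hx0b⟩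
  have h1l : (0:ℝ) < 1 - lam := by linarith
  have hinv1 : (1:ℝ) ≤ 1 / (1 - lam) := by rw [le_div_iff₀ h1l]; linarith
  -- iterates of J
  set xt : ℕ → ℤ → Fin N → Y := fun t => J^[t] x0 with hxtdef
  have hxtsucc : ∀ t, xt (t+1) = J (xt t) := fun t => Function.iterate_succ_apply' J t x0
  have hxtmem : ∀ t, memC a' n α (xt t) ∧ wD a' n α (xt t) 0 ≤ 1 / (1 - lam) := by
    intro t
    induction t with
    | zero => exact ⟨hx0mem, le_trans (wD_le zero_le_one hposm hx0b) hinv1⟩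
    | succ t ih =>
      rw [hxtsucc t]
      obtain ⟨hm, hw⟩ := ih
      obtain ⟨hm', hw'⟩ := part1 (xt t) hm
      refine ⟨hm', le_trans hw' ?_⟩
      have h3 : lam * wD a' n α (xt t) 0 ≤ lam * (1/(1-lam)) :=
        mul_le_mul_of_nonneg_left hw hlam0
      have heq : 1 + lam * (1/(1-lam)) = 1/(1-lam) := by field_simp; ring
      linarith
  have hxtw : ∀ (t : ℕ) (i : Fin N) (j : Fin (ρ+1)), xt t (n - (ρ:ℤ) + ((j:ℕ):ℤ)) i = α i j := fun t => ((hxtmem t).1).1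
  -- geometric decay of consecutive distances
  set C0 : ℝ := wD a' n α (xt 1) (xt 0) with hC0def
  have hgeo : ∀ t, wD a' n α (xt (t+1)) (xt t) ≤ lam ^ t * C0 := by
    intro t
    induction t with
    | zero => simp [hC0def]
    | succ t ih =>
      have h := part2 (xt (t+1)) (xt t) (hxtmem (t+1)).1 (hxtmem t).1
      rw [← hxtsucc t, ← hxtsucc (t+1)] at h
      refine le_trans h ?_
      calc lam * wD a' n α (xt (t+1)) (xt t) ≤ lam * (lam ^ t * C0) :=
            mul_le_mul_of_nonneg_left ih hlam0
        _ = lam ^ (t+1) * C0 := by ring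
  -- pointwise bound from weighted distance
  have hpt : ∀ (x y : ℤ → Fin N → Y), BddAbove (wSet a' n α x y) →
      ∀ k : ℤ, ∀ i, ∀ m : ℤ, n ≤ m → ∀ j : Fin (ρ+1), m - (ρ:ℤ) + ((j:ℕ):ℤ) = k →
      ‖x k i - y k i‖ ≤ wD a' n α x y * (a' m n * ‖α‖) := by
    intro x y hb k i m hm j hj
    have h1 : x k i - y k i = Dseg ρ x y m i j := by rw [← hj]; rfl
    rw [h1]
    exact le_trans (le_trans (norm_le_pi_norm _ j) (norm_le_pi_norm _ i))
      (Dseg_le_wD hb hm (hposm m hm))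
  -- pointwise limits
  have hlim : ∀ (k : ℤ) (i : Fin N), ∃ Lv : Y, n - (ρ:ℤ) ≤ k →
      Filter.Tendsto (fun t => xt t k i) Filter.atTop (nhds Lv) := by
    intro k i
    by_cases hk : n - (ρ:ℤ) ≤ k
    · obtain ⟨m, hm, j, hj⟩ := window ρ n k hk
      have hcs : CauchySeq (fun t => xt t k i) := by
        refine cauchySeq_of_le_geometric lam (C0 * (a' m n * ‖α‖)) hlam1 fun t => ?_
        rw [dist_comm, dist_eq_norm]
        have hb := (hbdd2 (xt (t+1)) (xt t) (hxtmem (t+1)).1 (hxtmem t).1).1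
        refine le_trans (hpt (xt (t+1)) (xt t) hb k i m hm j hj) ?_
        calc wD a' n α (xt (t+1)) (xt t) * (a' m n * ‖α‖)
            ≤ (lam ^ t * C0) * (a' m n * ‖α‖) :=
              mul_le_mul_of_nonneg_right (hgeo t) (hposm m hm).le
          _ = (C0 * (a' m n * ‖α‖)) * lam ^ t := by ring
      obtain ⟨Lv, hLv⟩ := cauchySeq_tendsto_of_complete hcs
      exact ⟨Lv, fun _ => hLv⟩
    · exact ⟨0, fun h => absurd h hk⟩
  choose xs hxs using hlim
  -- window values of xs
  have hxsw : ∀ (i : Fin N) (j : Fin (ρ+1)), xs (n - ρ + j) i = α i j := by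
    intro i j
    have hk : n - (ρ:ℤ) ≤ n - ρ + ((j:ℕ):ℤ) :=
      le_add_of_nonneg_right (Int.natCast_nonneg _)
    have ht := hxs (n - ρ + ((j:ℕ):ℤ)) i hk
    have hconst : (fun t => xt t (n - ρ + ((j:ℕ):ℤ)) i) = fun _ => α i j :=
      funext fun t => hxtw t i j
    rw [hconst] at ht
    exact tendsto_nhds_unique ht tendsto_const_nhds
  -- segments of xs are limits of segments of xt
  have hDt : ∀ m : ℤ, n ≤ m → Filter.Tendsto (fun t => Dseg ρ (xt t) 0 m)
      Filter.atTop (nhds (Dseg ρ xs 0 m)) := by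
    intro m hm
    rw [tendsto_pi_nhds]
    intro i
    rw [tendsto_pi_nhds]
    intro j
    have hk : n - (ρ:ℤ) ≤ m - ρ + ((j:ℕ):ℤ) := by
      have := Int.natCast_nonneg (j:ℕ)
      omega
    have ht := hxs (m - ρ + ((j:ℕ):ℤ)) i hk
    show Filter.Tendsto (fun t => xt t (m - ρ + ((j:ℕ):ℤ)) i - 0) Filter.atTop
      (nhds (xs (m - ρ + ((j:ℕ):ℤ)) i - 0))
    exact ht.sub tendsto_const_nhds
  have hxsb : ∀ m, n ≤ m → ‖Dseg ρ xs 0 m‖ ≤ (1/(1-lam)) * (a' m n * ‖α‖) := by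
    intro m hm
    refine le_of_tendsto' ((hDt m hm).norm) fun t => ?_
    refine le_trans (Dseg_le_wD (hxtmem t).1.2 hm (hposm m hm)) ?_
    exact mul_le_mul_of_nonneg_right (hxtmem t).2 (hposm m hm).le
  have hxsmem : memC a' n α xs := ⟨hxsw, bdd_of hposm hxsb⟩
  have hxswd : wD a' n α xs 0 ≤ 1 / (1 - lam) :=
    wD_le (le_trans zero_le_one hinv1) hposm hxsb
  -- xs is a fixed point
  have hfix : ∀ k : ℤ, n - ρ ≤ k → ∀ i, J xs k i = xs k i := by
    intro k hk i
    rcases le_or_gt k n with hkn | hkn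
    · obtain ⟨j, hj⟩ : ∃ j : Fin (ρ+1), n - (ρ:ℤ) + ((j:ℕ):ℤ) = k :=
        ⟨⟨(k - (n - ρ)).toNat, by omega⟩, by simp; omega⟩
      rw [← hj, hJn xs i j, hxsw i j]
    · have hkk : k - (ρ:ℤ) + (((Fin.last ρ : Fin (ρ+1)):ℕ):ℤ) = k := by
        simp [Fin.val_last]
      have hJval : ∀ x : ℤ → Fin N → Y, J x k i
          = ((A k n i) (α i)) (Fin.last ρ) + ∑ k' ∈ Finset.Ico n k,
              ((A k (k'+1) i) (Gam ρ (f k' (fun i' => seg ρ (fun k'' => x k'' i') k') i)))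
                (Fin.last ρ) := by
        intro x
        have h := congrFun (hJm x k hkn i) (Fin.last ρ)
        have hL : seg ρ (fun k'' => J x k'' i) k (Fin.last ρ) = J x k i := by
          show J x (k - ρ + (((Fin.last ρ : Fin (ρ+1)):ℕ):ℤ)) i = J x k i
          rw [hkk]
        rw [hL] at h
        rw [h]
        simp only [Pi.add_apply, Finset.sum_apply]
      have ht1 : Filter.Tendsto (fun t => xt (t+1) k i) Filter.atTop (nhds (xs k i)) :=
        (hxs k i hk).comp (Filter.tendsto_add_atTop_nat 1)
      have ht2 : Filter.Tendsto (fun t => xt (t+1) k i) Filter.atTop (nhds (J xs k i)) := by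
        have hrw : (fun t => xt (t+1) k i) = fun t =>
            ((A k n i) (α i)) (Fin.last ρ) + ∑ k' ∈ Finset.Ico n k,
              ((A k (k'+1) i) (Gam ρ (f k' (fun i' => seg ρ (fun k'' => xt t k'' i') k') i)))
                (Fin.last ρ) := by
          funext t
          rw [show xt (t+1) k i = J (xt t) k i from congrFun (congrFun (hxtsucc t) k) i,
            hJval (xt t)]
        rw [hrw, hJval xs]
        refine Filter.Tendsto.const_add _ ?_
        refine tendsto_finset_sum _ fun k' hk' => ?_
        have hk'n : n ≤ k' := (Finset.mem_Ico.mp hk').1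
        have hseg : Filter.Tendsto (fun t => (fun i' => seg ρ (fun k'' => xt t k'' i') k'))
            Filter.atTop (nhds (fun i' => seg ρ (fun k'' => xs k'' i') k')) := by
          rw [tendsto_pi_nhds]; intro i'
          rw [tendsto_pi_nhds]; intro j
          refine hxs (k' - ρ + ((j:ℕ):ℤ)) i' ?_
          have := Int.natCast_nonneg (j:ℕ)
          omega
        have hft : Filter.Tendsto
            (fun t => f k' (fun i' => seg ρ (fun k'' => xt t k'' i') k') i)
            Filter.atTop (nhds (f k' (fun i' => seg ρ (fun k'' => xs k'' i') k') i)) := by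
          rw [tendsto_iff_dist_tendsto_zero]
          refine squeeze_zero (g := fun t => Lf k' i *
              dist (fun i' => seg ρ (fun k'' => xt t k'' i') k')
                (fun i' => seg ρ (fun k'' => xs k'' i') k'))
              (fun t => dist_nonneg) (fun t => ?_) ?_
          · calc dist (f k' (fun i' => seg ρ (fun k'' => xt t k'' i') k') i)
                  (f k' (fun i' => seg ρ (fun k'' => xs k'' i') k') i)
                = ‖f k' (fun i' => seg ρ (fun k'' => xt t k'' i') k') i
                  - f k' (fun i' => seg ρ (fun k'' => xs k'' i') k') i‖ := dist_eq_norm _ _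
              _ ≤ Lf k' i * ‖(fun i' => seg ρ (fun k'' => xt t k'' i') k')
                  - (fun i' => seg ρ (fun k'' => xs k'' i') k')‖ := hfLip _ _ _ _
              _ = Lf k' i * dist (fun i' => seg ρ (fun k'' => xt t k'' i') k')
                  (fun i' => seg ρ (fun k'' => xs k'' i') k') := by rw [dist_eq_norm]
          · have h5 := (tendsto_iff_dist_tendsto_zero.mp hseg).const_mul (Lf k' i)
            simpa using h5
        have hgt : Filter.Tendsto
            (fun t => Gam ρ (f k' (fun i' => seg ρ (fun k'' => xt t k'' i') k') i))
            Filter.atTop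
            (nhds (Gam ρ (f k' (fun i' => seg ρ (fun k'' => xs k'' i') k') i))) := by
          rw [tendsto_pi_nhds]; intro j
          by_cases hj : (j:ℕ) = ρ
          · simpa [Gam, hj] using hft
          · simpa [Gam, hj] using (tendsto_const_nhds :
              Filter.Tendsto (fun _ : ℕ => (0:Y)) Filter.atTop (nhds 0))
        have hAt := ((A k (k'+1) i).continuous.tendsto _).comp hgt
        exact (tendsto_pi_nhds.mp hAt) (Fin.last ρ)
      exact tendsto_nhds_unique ht2 ht1
  -- uniqueness
  have huniq : ∀ z, memC a' n α z → (∀ k : ℤ, n - ρ ≤ k → ∀ i, J z k i = z k i) →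
      ∀ k : ℤ, n - ρ ≤ k → ∀ i, z k i = xs k i := by
    intro z hz hzfix k hk i
    have hbz := (hbdd2 z xs hz hxsmem).1
    have hD : ∀ m : ℤ, n ≤ m → Dseg ρ (J z) (J xs) m = Dseg ρ z xs m := by
      intro m hm
      funext i' j
      have hk' : n - (ρ:ℤ) ≤ m - ρ + ((j:ℕ):ℤ) := by
        have := Int.natCast_nonneg (j:ℕ)
        omega
      show J z (m - ρ + ((j:ℕ):ℤ)) i' - J xs (m - ρ + ((j:ℕ):ℤ)) i' = _
      rw [hzfix _ hk' i', hfix _ hk' i']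
      rfl
    have hset : wSet a' n α (J z) (J xs) = wSet a' n α z xs := by
      ext s
      exact exists_congr fun m => and_congr_right fun hm => by
        rw [show (fun i => seg ρ (fun k => J z k i - J xs k i) m) = Dseg ρ (J z) (J xs) m from rfl,
          hD m hm]
        rfl
    have h2 : wD a' n α z xs ≤ lam * wD a' n α z xs := by
      have h := part2 z xs hz hxsmem
      have heq : wD a' n α (J z) (J xs) = wD a' n α z xs := by
        unfold wD; rw [hset]
      rwa [heq] at h
    have hz0 : 0 ≤ wD a' n α z xs := wD_nonneg hbz (hposm n le_rfl)
    have hw0 : wD a' n α z xs ≤ 0 := by nlinarith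
    obtain ⟨m, hm, j, hj⟩ := window ρ n k hk
    have hb := hpt z xs hbz k i m hm j hj
    have hnorm : ‖z k i - xs k i‖ ≤ 0 := by nlinarith [hposm m hm]
    exact sub_eq_zero.mp (norm_le_zero_iff.mp hnorm)
  exact ⟨part1, part2, xs, hxsmem, hfix, hxswd, huniq⟩
end
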